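/- arXiv:1209.4122 — 5 statements merged into one kernel-verified Lean document; each statement's English description precedes it below -/
import Mathlib

section
/- Let (X, H, Y) be an sl₂-triple of n×n real matrices, let ν be any n×n real matrix, and let t > 0 be a real number. Set γ_t = exp(−(ln t / 2)·H), the matrix exponential, which is an invertible n×n real matrix. Then the map ξ ↦ t·(γ_t ξ γ_t⁻¹) restricts to a bijection from O_ν ∩ (X + Z(Y)) onto O_{tν} ∩ (X + Z(Y)), where O_M := {g M g⁻¹ : g ∈ GL(n,ℝ)}. -/
open NormedSpace

variable {n : ℕ}

lemma exp_semiconj (M A N : Matrix (Fin n) (Fin n) ℝ) (h : M * A = A * N) :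
    exp M * A = A * exp N := by
  have hpow : ∀ k : ℕ, M ^ k * A = A * N ^ k := by
    intro k
    induction k with
    | zero => simp
    | succ k ih =>
      rw [pow_succ, pow_succ, mul_assoc, h, ← mul_assoc, ih, mul_assoc]
  have hsM : Summable (fun k : ℕ => ((k.factorial : ℝ)⁻¹) • M ^ k) := by
    letI : NormedRing (Matrix (Fin n) (Fin n) ℝ) := Matrix.linftyOpNormedRing
    letI : NormedAlgebra ℝ (Matrix (Fin n) (Fin n) ℝ) := Matrix.linftyOpNormedAlgebra
    exact expSeries_summable' (𝕂 := ℝ) M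
  have hsN : Summable (fun k : ℕ => ((k.factorial : ℝ)⁻¹) • N ^ k) := by
    letI : NormedRing (Matrix (Fin n) (Fin n) ℝ) := Matrix.linftyOpNormedRing
    letI : NormedAlgebra ℝ (Matrix (Fin n) (Fin n) ℝ) := Matrix.linftyOpNormedAlgebra
    exact expSeries_summable' (𝕂 := ℝ) N
  simp only [exp_eq_tsum ℝ]
  rw [← Summable.tsum_mul_right A hsM,
    ← Summable.tsum_mul_left A hsN]
  refine tsum_congr fun k => ?_
  rw [smul_mul_assoc, hpow k, mul_smul_comm]

lemma exp_conj_eigen (H A : Matrix (Fin n) (Fin n) ℝ) (c s : ℝ)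
    (h : H * A - A * H = c • A) :
    exp (s • H) * A * exp (-(s • H)) = Real.exp (s * c) • A := by
  have h' : H * A = c • A + A * H := sub_eq_iff_eq_add.mp h
  have hsemi : (s • H) * A = A * (s • H + (s * c) • (1 : Matrix (Fin n) (Fin n) ℝ)) := by
    rw [smul_mul_assoc, h', mul_add, smul_add, smul_smul, mul_smul_comm, mul_smul_comm, mul_one,
      add_comm]
  have hcomm : Commute (s • H) ((s * c) • (1 : Matrix (Fin n) (Fin n) ℝ)) :=
    (Commute.one_right (s • H)).smul_right (s * c)
  have hexpN : exp (s • H + (s * c) • (1 : Matrix (Fin n) (Fin n) ℝ))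
      = exp (s • H) * exp ((s * c) • (1 : Matrix (Fin n) (Fin n) ℝ)) :=
    Matrix.exp_add_of_commute _ _ hcomm
  have hexp1 : exp ((s * c) • (1 : Matrix (Fin n) (Fin n) ℝ))
      = Real.exp (s * c) • (1 : Matrix (Fin n) (Fin n) ℝ) := by
    letI : NormedRing (Matrix (Fin n) (Fin n) ℝ) := Matrix.linftyOpNormedRing
    letI : NormedAlgebra ℝ (Matrix (Fin n) (Fin n) ℝ) := Matrix.linftyOpNormedAlgebra
    have := algebraMap_exp_comm (𝔸 := Matrix (Fin n) (Fin n) ℝ) (s * c)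
    rw [Algebra.algebraMap_eq_smul_one, Algebra.algebraMap_eq_smul_one, ← Real.exp_eq_exp_ℝ] at this
    exact this.symm
  have h2 : exp (s • H) * A = Real.exp (s * c) • (A * exp (s • H)) := by
    rw [exp_semiconj _ _ _ hsemi, hexpN, hexp1, ← mul_assoc, mul_smul_comm, mul_one]
  have hinv : exp (s • H) * exp (-(s • H)) = 1 := by
    rw [← Matrix.exp_add_of_commute _ _ (Commute.neg_right (Commute.refl (s • H))),
      add_neg_cancel, exp_zero]
  rw [h2, smul_mul_assoc, mul_assoc, hinv, mul_one]

open NormedSpace in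
/-- The scaling identity `O_{tν} ∩ S_X = t γ_t (O_ν ∩ S_X)` from Section 4: for `t > 0`
and `γ_t = exp(-(ln t / 2) H)`, the map `ξ ↦ t γ_t ξ γ_t⁻¹` is a bijection from
`O_ν ∩ (X + Z(Y))` onto `O_{tν} ∩ (X + Z(Y))`.  (The matrix `γ_t` is invertible, with
inverse `exp((ln t / 2) H)`.) -/
theorem scaling_bijOn_orbit_inter_slice
    {n : ℕ} (X H Y ν : Matrix (Fin n) (Fin n) ℝ)
    (hX0 : X ≠ 0)
    (hHX : H * X - X * H = (2 : ℝ) • X)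
    (hHY : H * Y - Y * H = (-2 : ℝ) • Y)
    (hXY : X * Y - Y * X = H)
    (t : ℝ) (ht : 0 < t) :
    ∃ γinv : Matrix (Fin n) (Fin n) ℝ,
      exp ((-(Real.log t / 2)) • H) * γinv = 1 ∧
      γinv * exp ((-(Real.log t / 2)) • H) = 1 ∧
      Set.BijOn (fun ξ : Matrix (Fin n) (Fin n) ℝ =>
          t • (exp ((-(Real.log t / 2)) • H) * ξ * γinv))
        ({M | ∃ g : GL (Fin n) ℝ,
            M = (g : Matrix (Fin n) (Fin n) ℝ) * ν * (↑g⁻¹ : Matrix (Fin n) (Fin n) ℝ)} ∩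
          {M | ∃ C, C * Y = Y * C ∧ M = X + C})
        ({M | ∃ g : GL (Fin n) ℝ,
            M = (g : Matrix (Fin n) (Fin n) ℝ) * (t • ν) * (↑g⁻¹ : Matrix (Fin n) (Fin n) ℝ)} ∩
          {M | ∃ C, C * Y = Y * C ∧ M = X + C}) := by
  set s : ℝ := -(Real.log t / 2) with hs
  set γ : Matrix (Fin n) (Fin n) ℝ := exp (s • H) with hγ
  set γi : Matrix (Fin n) (Fin n) ℝ := exp (-(s • H)) with hγi
  have hinv1 : γ * γi = 1 := by
    rw [hγ, hγi, ← Matrix.exp_add_of_commute _ _ (Commute.neg_right (Commute.refl (s • H))),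
      add_neg_cancel, exp_zero]
  have hinv2 : γi * γ = 1 := by
    rw [hγ, hγi, ← Matrix.exp_add_of_commute _ _ (Commute.neg_left (Commute.refl (s • H))),
      neg_add_cancel, exp_zero]
  -- conjugation facts
  have hval1 : Real.exp (s * 2) = t⁻¹ := by
    rw [hs, show -(Real.log t / 2) * 2 = -Real.log t by ring, Real.exp_neg, Real.exp_log ht]
  have hval2 : Real.exp (s * (-2)) = t := by
    rw [hs, show -(Real.log t / 2) * (-2) = Real.log t by ring, Real.exp_log ht]
  have hval3 : Real.exp ((-s) * 2) = t := by
    rw [hs, show -(-(Real.log t / 2)) * 2 = Real.log t by ring, Real.exp_log ht]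
  have hval4 : Real.exp ((-s) * (-2)) = t⁻¹ := by
    rw [hs, show -(-(Real.log t / 2)) * (-2) = -Real.log t by ring, Real.exp_neg,
      Real.exp_log ht]
  have hX1 : γ * X * γi = t⁻¹ • X := by
    rw [hγ, hγi, exp_conj_eigen H X 2 s hHX, hval1]
  have hY1 : γ * Y * γi = t • Y := by
    rw [hγ, hγi, exp_conj_eigen H Y (-2) s hHY, hval2]
  have hX2 : γi * X * γ = t • X := by
    have h := exp_conj_eigen H X 2 (-s) hHX
    rw [neg_smul, neg_neg, hval3] at h
    rw [hγ, hγi, h]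
  have hY2 : γi * Y * γ = t⁻¹ • Y := by
    have h := exp_conj_eigen H Y (-2) (-s) hHY
    rw [neg_smul, neg_neg, hval4] at h
    rw [hγ, hγi, h]
  -- semiconjugation forms
  have hgY : γ * Y = t • (Y * γ) := by
    calc γ * Y = (γ * Y * γi) * γ := by rw [mul_assoc (γ * Y), hinv2, mul_one]
    _ = t • (Y * γ) := by rw [hY1, smul_mul_assoc]
  have hgiY : γi * Y = t⁻¹ • (Y * γi) := by
    calc γi * Y = (γi * Y * γ) * γi := by rw [mul_assoc (γi * Y), hinv1, mul_one]
    _ = t⁻¹ • (Y * γi) := by rw [hY2, smul_mul_assoc]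
  -- commutation transfer
  have keyC : ∀ (a : ℝ) (g gi C : Matrix (Fin n) (Fin n) ℝ), a ≠ 0 →
      g * Y = a • (Y * g) → gi * Y = a⁻¹ • (Y * gi) → C * Y = Y * C →
      (g * C * gi) * Y = Y * (g * C * gi) := by
    intro a g gi C ha hg hgi hC
    have hg' : Y * g = a⁻¹ • (g * Y) := by
      rw [hg, smul_smul, inv_mul_cancel₀ ha, one_smul]
    have e1 : C * (Y * gi) = Y * (C * gi) := by rw [← mul_assoc, hC, mul_assoc]
    have step1 : (g * C * gi) * Y = a⁻¹ • (g * (Y * (C * gi))) := by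
      rw [mul_assoc, hgi, mul_smul_comm, mul_assoc, e1]
    have step2 : Y * (g * C * gi) = a⁻¹ • (g * (Y * (C * gi))) := by
      rw [← mul_assoc, ← mul_assoc, hg', smul_mul_assoc, smul_mul_assoc, mul_assoc, mul_assoc]
    rw [step1, step2]
  have u : GL (Fin n) ℝ := ⟨γ, γi, hinv1, hinv2⟩
  refine ⟨γi, hinv1, hinv2, ?_⟩
  have hmaps1 : Set.MapsTo (fun ξ : Matrix (Fin n) (Fin n) ℝ => t • (γ * ξ * γi))
      ({M | ∃ g : GL (Fin n) ℝ,
          M = (g : Matrix (Fin n) (Fin n) ℝ) * ν * (↑g⁻¹ : Matrix (Fin n) (Fin n) ℝ)} ∩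
        {M | ∃ C, C * Y = Y * C ∧ M = X + C})
      ({M | ∃ g : GL (Fin n) ℝ,
          M = (g : Matrix (Fin n) (Fin n) ℝ) * (t • ν) * (↑g⁻¹ : Matrix (Fin n) (Fin n) ℝ)} ∩
        {M | ∃ C, C * Y = Y * C ∧ M = X + C}) := by
    rintro ξ ⟨⟨g, hg⟩, ⟨C, hCY, hC⟩⟩
    constructor
    · refine ⟨(⟨γ, γi, hinv1, hinv2⟩ : GL (Fin n) ℝ) * g, ?_⟩
      simp only [hg, mul_inv_rev, Units.val_mul, Units.inv_mk]
      show t • (γ * ((g : Matrix (Fin n) (Fin n) ℝ) * ν * (↑g⁻¹ : Matrix (Fin n) (Fin n) ℝ)) * γi) = _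
      simp only [mul_assoc, Matrix.mul_smul, Matrix.smul_mul, mul_smul_comm, smul_mul_assoc]
    · refine ⟨t • (γ * C * γi), ?_, ?_⟩
      · have h := keyC t γ γi C ht.ne' hgY hgiY hCY
        rw [smul_mul_assoc, h, mul_smul_comm]
      · show t • (γ * ξ * γi) = _
        rw [hC, mul_add, add_mul, smul_add, hX1, smul_smul, mul_inv_cancel₀ ht.ne', one_smul]
  have hmaps2 : Set.MapsTo (fun ξ : Matrix (Fin n) (Fin n) ℝ => t⁻¹ • (γi * ξ * γ))
      ({M | ∃ g : GL (Fin n) ℝ,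
          M = (g : Matrix (Fin n) (Fin n) ℝ) * (t • ν) * (↑g⁻¹ : Matrix (Fin n) (Fin n) ℝ)} ∩
        {M | ∃ C, C * Y = Y * C ∧ M = X + C})
      ({M | ∃ g : GL (Fin n) ℝ,
          M = (g : Matrix (Fin n) (Fin n) ℝ) * ν * (↑g⁻¹ : Matrix (Fin n) (Fin n) ℝ)} ∩
        {M | ∃ C, C * Y = Y * C ∧ M = X + C}) := by
    rintro ξ ⟨⟨g, hg⟩, ⟨C, hCY, hC⟩⟩
    constructor
    · refine ⟨(⟨γ, γi, hinv1, hinv2⟩ : GL (Fin n) ℝ)⁻¹ * g, ?_⟩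
      simp only [hg, mul_inv_rev, Units.val_mul, Units.inv_mk, inv_inv]
      show t⁻¹ • (γi * ((g : Matrix (Fin n) (Fin n) ℝ) * (t • ν) * (↑g⁻¹ : Matrix (Fin n) (Fin n) ℝ)) * γ) = _
      simp only [mul_assoc, Matrix.mul_smul, Matrix.smul_mul, mul_smul_comm, smul_mul_assoc,
        smul_smul, inv_mul_cancel₀ ht.ne', one_smul]
    · refine ⟨t⁻¹ • (γi * C * γ), ?_, ?_⟩
      · have h := keyC t⁻¹ γi γ C (inv_ne_zero ht.ne') hgiY (by rw [inv_inv]; exact hgY) hCY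
        rw [smul_mul_assoc, h, mul_smul_comm]
      · show t⁻¹ • (γi * ξ * γ) = _
        rw [hC, mul_add, add_mul, smul_add, hX2, smul_smul, inv_mul_cancel₀ ht.ne', one_smul]
  have linv : ∀ ξ : Matrix (Fin n) (Fin n) ℝ, t⁻¹ • (γi * (t • (γ * ξ * γi)) * γ) = ξ := by
    intro ξ
    rw [mul_smul_comm, smul_mul_assoc, smul_smul, inv_mul_cancel₀ ht.ne', one_smul]
    have : γi * (γ * ξ * γi) * γ = (γi * γ) * ξ * (γi * γ) := by
      simp only [mul_assoc]
    rw [this, hinv2, one_mul, mul_one]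
  have rinv : ∀ ξ : Matrix (Fin n) (Fin n) ℝ, t • (γ * (t⁻¹ • (γi * ξ * γ)) * γi) = ξ := by
    intro ξ
    rw [mul_smul_comm, smul_mul_assoc, smul_smul, mul_inv_cancel₀ ht.ne', one_smul]
    have : γ * (γi * ξ * γ) * γi = (γ * γi) * ξ * (γ * γi) := by
      simp only [mul_assoc]
    rw [this, hinv1, one_mul, mul_one]
  exact Set.InvOn.bijOn ⟨fun x _ => linv x, fun y _ => rinv y⟩ hmaps1 hmaps2
end

section
/- Let (X, H, Y) be an sl₂-triple of n×n real matrices. Then the ℝ-linear subspaces {[A, X] : A ∈ Matrix (Fin n) (Fin n) ℝ} and Z(Y) = {B : BY = YB} of the space of n×n real matrices are complementary: their intersection is {0} and their sum is the whole matrix space, so Matrix (Fin n) (Fin n) ℝ = [𝔤, X] ⊕ Z_𝔤(Y) as a direct sum of subspaces. -/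
open Polynomial

namespace Sl2ProofAux

/-- Basic noncommutative commutator rule. -/
lemma comm_rule2 {A : Type*} [Ring A] {p q r : A} (h : p * q - q * p = r) (a : A) :
    p * (q * a - a * q) - (q * a - a * q) * p
      = (q * (p * a - a * p) - (p * a - a * p) * q) + (r * a - a * r) := by
  rw [← h]; noncomm_ring

lemma comm_rule {A : Type*} [Ring A] [Algebra ℂ A] {p q : A} {c : ℂ}
    (h : p * q - q * p = c • q) (a : A) :
    p * (q * a - a * q) - (q * a - a * q) * p
      = (q * (p * a - a * p) - (p * a - a * p) * q) + c • (q * a - a * q) := by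
  rw [comm_rule2 h a]
  congr 1
  rw [smul_sub, smul_mul_assoc, mul_smul_comm]

lemma mul_pow_comm {A : Type*} [Ring A] {f t t' : A} (h : f * t = t' * f) :
    ∀ n : ℕ, f * t ^ n = t' ^ n * f := by
  intro n
  induction n with
  | zero => simp
  | succ n ih =>
    rw [pow_succ, ← mul_assoc, ih, mul_assoc, h, ← mul_assoc, ← pow_succ]

variable {V : Type*} [AddCommGroup V] [Module ℂ V]

lemma pow_eigen (S : Module.End ℂ V) {x : V} {a : ℂ} (h : S x = a • x) :
    ∀ e : ℕ, (S ^ e) x = a ^ e • x := by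
  intro e
  induction e with
  | zero => simp
  | succ e ih =>
    rw [pow_succ, Module.End.mul_apply, h, map_smul, ih, smul_smul, pow_succ, mul_comm]

lemma aeval_eigen (T : Module.End ℂ V) {w : V} {c : ℂ} (h : T w = c • w) (q : ℂ[X]) :
    (aeval T q) w = q.eval c • w := by
  have hpow : ∀ n : ℕ, (T ^ n) w = c ^ n • w := by
    intro n
    induction n with
    | zero => simp
    | succ n ih =>
      rw [pow_succ, Module.End.mul_apply, h, map_smul, ih, smul_smul, pow_succ]
      ring_nf
  induction q using Polynomial.induction_on' with
  | add p q hp hq => simp [hp, hq, add_smul]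
  | monomial n a =>
    rw [aeval_monomial, eval_monomial, Module.End.mul_apply, hpow,
      Module.algebraMap_end_apply, smul_smul]

variable [FiniteDimensional ℂ V]

/-- If some power of `T - λ•1` kills a nonzero vector, `λ` is a root of the charpoly of `T`. -/
lemma isRoot_charpoly_of_genEig (T : Module.End ℂ V) (lam : ℂ) (d : ℕ) (v : V)
    (hv : v ≠ 0) (h : ((T - lam • 1) ^ d) v = 0) :
    T.charpoly.IsRoot lam := by
  by_contra hroot
  set p := T.charpoly with hp
  have hev : p.eval lam ≠ 0 := hroot
  -- coprimality of (X - C lam) with p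
  have hco1 : IsCoprime (X - C lam) p := by
    refine ⟨-(C (p.eval lam)⁻¹ * (p /ₘ (X - C lam))), C (p.eval lam)⁻¹, ?_⟩
    have hdiv := modByMonic_add_div p (X - C lam)
    rw [modByMonic_X_sub_C_eq_C_eval] at hdiv
    have : (X - C lam) * (p /ₘ (X - C lam)) = p - C (p.eval lam) := by
      linear_combination hdiv
    calc -(C (p.eval lam)⁻¹ * (p /ₘ (X - C lam))) * (X - C lam) + C (p.eval lam)⁻¹ * p
        = C (p.eval lam)⁻¹ * (p - (X - C lam) * (p /ₘ (X - C lam))) := by ring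
      _ = C (p.eval lam)⁻¹ * C (p.eval lam) := by rw [this]; ring
      _ = 1 := by rw [← C_mul, inv_mul_cancel₀ hev, C_1]
  have hco : IsCoprime ((X - C lam) ^ d) p := hco1.pow_left
  obtain ⟨a, b, hab⟩ := hco
  have haev : aeval T ((X - C lam) ^ d) = (T - lam • 1) ^ d := by
    rw [map_pow]
    congr 1
    ext x
    simp [Module.algebraMap_end_apply]
  have h2 := congrArg (fun q : ℂ[X] => (aeval T q) v) hab
  simp only [map_add, map_mul, map_one, Module.End.mul_apply, LinearMap.add_apply,
    Module.End.one_apply] at h2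
  rw [haev, h, LinearMap.aeval_self_charpoly] at h2
  simp only [map_zero, LinearMap.zero_apply, add_zero] at h2
  exact hv h2.symm


variable {V : Type*} [AddCommGroup V] [Module ℂ V]

lemma aeval_X_sub_C_pow [FiniteDimensional ℂ V] (T : Module.End ℂ V) (c : ℂ) (d : ℕ) :
    Polynomial.aeval T ((X - C c) ^ d) = (T - c • 1) ^ d := by
  rw [map_pow]
  congr 1
  ext x
  simp [Module.algebraMap_end_apply]

variable [FiniteDimensional ℂ V]

/-- Key `sl₂` lemma: a vector killed by `E` and lying in the range of `F` is zero. -/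
lemma eq_zero_of_mem_ker_of_mem_range
    (E F Hd : Module.End ℂ V)
    (hHE : ∀ v, Hd (E v) = E (Hd v) + (2 : ℂ) • E v)
    (hHF : ∀ v, Hd (F v) = F (Hd v) - (2 : ℂ) • F v)
    (hEF : ∀ v, E (F v) = F (E v) + Hd v) :
    ∀ v, E v = 0 → v ∈ LinearMap.range F → v = 0 := by
  intro v0 hEv0 hv0mem
  by_contra hne
  classical
  set W : Submodule ℂ V := LinearMap.ker E ⊓ LinearMap.range F with hW
  have hv0W : v0 ∈ W := ⟨LinearMap.mem_ker.mpr hEv0, hv0mem⟩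
  have hWbot : W ≠ ⊥ := by
    intro hbot
    exact hne (by simpa [hbot] using hv0W)
  have hWstab : ∀ x ∈ W, Hd x ∈ W := by
    intro x hx
    rw [Submodule.mem_inf] at hx ⊢
    obtain ⟨hx1, u, hu⟩ := hx
    rw [LinearMap.mem_ker] at hx1
    constructor
    · rw [LinearMap.mem_ker]
      have h := hHE x
      rw [hx1, map_zero, smul_zero, add_zero] at h
      exact h.symm
    · refine ⟨Hd u - (2 : ℂ) • u, ?_⟩
      rw [map_sub, map_smul, ← hHF u, hu]
  haveI : Nontrivial W := Submodule.nontrivial_iff_ne_bot.mpr hWbot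
  obtain ⟨k, hk⟩ := Module.End.exists_eigenvalue (Hd.restrict hWstab)
  obtain ⟨w', hw'⟩ := hk.exists_hasEigenvector
  set w : V := (w' : V) with hwdef
  have hw0 : w ≠ 0 := fun h => hw'.right (Submodule.coe_eq_zero.mp h)
  have hHw : Hd w = k • w := by
    have := congrArg (Subtype.val) hw'.apply_eq_smul
    simpa [LinearMap.restrict_coe_apply] using this
  have hmemW := Submodule.mem_inf.mp w'.2
  have hEw : E w = 0 := LinearMap.mem_ker.mp hmemW.1
  obtain ⟨u, hu⟩ : w ∈ LinearMap.range F := hmemW.2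
  -- the charpoly of Hd
  set p : Polynomial ℂ := Hd.charpoly with hpdef
  have hpne : p ≠ 0 := (LinearMap.charpoly_monic Hd).ne_zero
  -- Step 1: the string downwards, showing k is a natural number
  have hS1 : ∀ j : ℕ, Hd (F^[j] w) = (k - 2 * j) • (F^[j] w) := by
    intro j
    induction j with
    | zero => simpa using hHw
    | succ j ih =>
      rw [Function.iterate_succ_apply', hHF, ih, map_smul, ← sub_smul]
      congr 1
      push_cast
      ring
  have hS2 : ∀ j : ℕ, E (F^[j + 1] w) = (((j : ℂ) + 1) * (k - j)) • (F^[j] w) := by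
    intro j
    induction j with
    | zero =>
      rw [Function.iterate_one, hEF, hEw, map_zero, zero_add, hHw]
      norm_num
    | succ j ih =>
      rw [Function.iterate_succ_apply' F (j + 1), hEF, ih, map_smul,
        ← Function.iterate_succ_apply' F j w, hS1 (j + 1), ← add_smul]
      congr 1
      push_cast
      ring
  have hfin : ∃ j, F^[j] w = 0 := by
    by_contra hj
    push_neg at hj
    have hmem : ∀ j : ℕ, (k - 2 * (j : ℂ)) ∈ {x | p.IsRoot x} := by
      intro j
      refine isRoot_charpoly_of_genEig Hd _ 1 (F^[j] w) (hj j) ?_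
      rw [pow_one, LinearMap.sub_apply, hS1 j]
      simp
    have hinj : Function.Injective (fun j : ℕ => k - 2 * (j : ℂ)) := by
      intro a b hab
      simp only [sub_right_inj, mul_right_inj' (two_ne_zero (α := ℂ))] at hab
      exact_mod_cast hab
    exact (Set.infinite_of_injective_forall_mem hinj hmem) (finite_setOf_isRoot hpne)
  have h0ne : F^[0] w ≠ 0 := by simpa using hw0
  have hfind : Nat.find hfin ≠ 0 := fun h => h0ne (h ▸ Nat.find_spec hfin)
  obtain ⟨r, hr⟩ : ∃ r, Nat.find hfin = r + 1 :=
    ⟨Nat.find hfin - 1, (Nat.succ_pred_eq_of_pos (Nat.pos_of_ne_zero hfind)).symm⟩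
  have hSr : F^[r] w ≠ 0 := Nat.find_min hfin (by omega)
  have hSr1 : F^[r + 1] w = 0 := hr ▸ Nat.find_spec hfin
  have hkr : k = r := by
    have h := hS2 r
    rw [hSr1, map_zero] at h
    rcases smul_eq_zero.mp h.symm with h' | h'
    · rcases mul_eq_zero.mp h' with h'' | h''
      · exact absurd h'' (Nat.cast_add_one_ne_zero r)
      · exact sub_eq_zero.mp h''
    · exact absurd h' hSr
  -- Step 2: replace u by a generalized eigenvector
  set c : ℂ := k + 2 with hcdef
  obtain ⟨g, hpg, hgnd⟩ := p.exists_eq_pow_rootMultiplicity_mul_and_not_dvd hpne c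
  set d : ℕ := Polynomial.rootMultiplicity c p with hddef
  have hgc : Polynomial.eval c g ≠ 0 := fun hz => hgnd (Polynomial.dvd_iff_isRoot.mpr hz)
  set u' : V := (Polynomial.aeval Hd g) u with hu'def
  have hFHd : F * Hd = (Hd + (2 : ℂ) • 1) * F := by
    ext x
    have h := hHF x
    simp only [Module.End.mul_apply, LinearMap.add_apply, LinearMap.smul_apply,
      Module.End.one_apply]
    rw [eq_sub_iff_add_eq] at h
    exact h.symm
  have hFu' : F u' = (Polynomial.eval c g) • w := by
    have hq : ∀ q : Polynomial ℂ, F * Polynomial.aeval Hd q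
        = Polynomial.aeval (Hd + (2 : ℂ) • 1) q * F := by
      intro q
      induction q using Polynomial.induction_on' with
      | add s t hs ht => rw [map_add, map_add, mul_add, add_mul, hs, ht]
      | monomial m a =>
        rw [Polynomial.aeval_monomial, Polynomial.aeval_monomial, ← mul_assoc,
          ← Algebra.commutes a F, mul_assoc, mul_pow_comm hFHd m, ← mul_assoc, mul_assoc]
    have h := congrArg (fun T : Module.End ℂ V => T u) (hq g)
    simp only [Module.End.mul_apply] at h
    have heig : (Hd + (2 : ℂ) • 1) w = c • w := by
      simp only [LinearMap.add_apply, LinearMap.smul_apply, Module.End.one_apply, hHw, hcdef]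
      module
    rw [hu'def, h, hu, aeval_eigen _ heig]
  have hu'ne : u' ≠ 0 := by
    intro hz
    rw [hz, map_zero] at hFu'
    exact hw0 (by simpa [smul_eq_zero, hgc] using hFu'.symm)
  have hgen0 : ((Hd - c • 1) ^ d) u' = 0 := by
    have h1 : (Polynomial.aeval Hd ((X - C c) ^ d)) u' = 0 := by
      have h2 : Polynomial.aeval Hd ((X - C c) ^ d) * Polynomial.aeval Hd g
          = Polynomial.aeval Hd p := by rw [← map_mul, ← hpg]
      have h3 := congrArg (fun T : Module.End ℂ V => T u) h2
      simp only [Module.End.mul_apply] at h3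
      rw [hu'def, h3, hpdef, LinearMap.aeval_self_charpoly, LinearMap.zero_apply]
    rwa [aeval_X_sub_C_pow] at h1
  -- Step 3: the string upwards from u'
  have hEshift : ∀ (lam : ℂ), E * (Hd - lam • 1) = (Hd - (lam + 2) • 1) * E := by
    intro lam
    ext x
    have h := hHE x
    simp only [Module.End.mul_apply, LinearMap.sub_apply, LinearMap.smul_apply,
      Module.End.one_apply, map_sub, map_smul]
    rw [h]
    module
  have hVgen : ∀ j : ℕ, ((Hd - (c + 2 * j) • 1) ^ d) (E^[j] u') = 0 := by
    intro j
    induction j with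
    | zero => simpa using hgen0
    | succ j ih =>
      have hcomm := mul_pow_comm (hEshift (c + 2 * j)) d
      have h := congrArg (fun T : Module.End ℂ V => T (E^[j] u')) hcomm
      simp only [Module.End.mul_apply] at h
      have hc2 : c + 2 * ((j : ℂ) + 1) = (c + 2 * j) + 2 := by ring
      rw [Function.iterate_succ_apply']
      push_cast
      rw [hc2, ← h, ih, map_zero]
  have hfin' : ∃ j, E^[j] u' = 0 := by
    by_contra hj
    push_neg at hj
    have hmem : ∀ j : ℕ, (c + 2 * (j : ℂ)) ∈ {x | p.IsRoot x} :=
      fun j => isRoot_charpoly_of_genEig Hd _ d (E^[j] u') (hj j) (hVgen j)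
    have hinj : Function.Injective (fun j : ℕ => c + 2 * (j : ℂ)) := by
      intro a b hab
      simp only [add_right_inj, mul_right_inj' (two_ne_zero (α := ℂ))] at hab
      exact_mod_cast hab
    exact (Set.infinite_of_injective_forall_mem hinj hmem) (finite_setOf_isRoot hpne)
  have h0ne' : E^[0] u' ≠ 0 := by simpa using hu'ne
  have hfind' : Nat.find hfin' ≠ 0 := fun h => h0ne' (h ▸ Nat.find_spec hfin')
  obtain ⟨m, hm⟩ : ∃ m, Nat.find hfin' = m + 1 :=
    ⟨Nat.find hfin' - 1, (Nat.succ_pred_eq_of_pos (Nat.pos_of_ne_zero hfind')).symm⟩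
  have hvm : E^[m] u' ≠ 0 := Nat.find_min hfin' (by omega)
  have hvm1 : E^[m + 1] u' = 0 := hm ▸ Nat.find_spec hfin'
  -- the key identity for the string upwards
  have hEw' : E (F u') = 0 := by
    rw [hFu', map_smul, hEw, smul_zero]
  have hP : ∀ j : ℕ, F (E^[j + 1] u')
      = -(((j : ℂ) + 1)) • (Hd (E^[j] u') - (j : ℂ) • (E^[j] u')) := by
    intro j
    induction j with
    | zero =>
      have h := hEF u'
      rw [hEw'] at h
      have h' : F (E u') = -(Hd u') := eq_neg_of_add_eq_zero_left h.symm
      rw [Function.iterate_one, h']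
      simp
    | succ j ih =>
      have h1 := hEF (E^[j + 1] u')
      rw [ih, map_smul] at h1
      have h2 : E (Hd (E^[j] u') - (j : ℂ) • E^[j] u')
          = Hd (E^[j + 1] u') - ((j : ℂ) + 2) • E^[j + 1] u' := by
        have h3 := hHE (E^[j] u')
        rw [← Function.iterate_succ_apply' E j] at h3
        rw [map_sub, map_smul, ← Function.iterate_succ_apply' E j]
        linear_combination (norm := module) -h3
      rw [h2] at h1
      rw [Function.iterate_succ_apply' E (j + 1)]
      push_cast
      linear_combination (norm := module) -h1
  -- conclude
  have hHvm : Hd (E^[m] u') = (m : ℂ) • (E^[m] u') := by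
    have h := hP m
    rw [hvm1, map_zero] at h
    have h2 := h.symm
    rw [neg_smul, neg_eq_zero] at h2
    rcases smul_eq_zero.mp h2 with h' | h'
    · exact absurd h' (Nat.cast_add_one_ne_zero m)
    · rw [sub_eq_zero] at h'
      exact h'
  have hSx : (Hd - (c + 2 * m) • 1) (E^[m] u')
      = ((m : ℂ) - (c + 2 * m)) • (E^[m] u') := by
    rw [LinearMap.sub_apply, hHvm, LinearMap.smul_apply, Module.End.one_apply, ← sub_smul]
  have hpow := pow_eigen _ hSx d
  rw [hVgen m] at hpow
  have hzero : ((m : ℂ) - (c + 2 * m)) ^ d = 0 := by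
    by_contra hzz
    exact hvm (by simpa [smul_eq_zero, hzz] using hpow.symm)
  have hc0 : (m : ℂ) - (c + 2 * m) = 0 := (pow_eq_zero_iff'.mp hzero).1
  rw [hcdef, hkr] at hc0
  have hfinal : ((r + m + 2 : ℕ) : ℂ) = 0 := by
    push_cast
    linear_combination -hc0
  have hnat : r + m + 2 = 0 := by exact_mod_cast hfinal
  omega

/-- Both disjointness statements, by symmetry. -/
lemma eq_zero_of_mem_ker_of_mem_range'
    (E F Hd : Module.End ℂ V)
    (hHE : ∀ v, Hd (E v) = E (Hd v) + (2 : ℂ) • E v)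
    (hHF : ∀ v, Hd (F v) = F (Hd v) - (2 : ℂ) • F v)
    (hEF : ∀ v, E (F v) = F (E v) + Hd v) :
    ∀ v, F v = 0 → v ∈ LinearMap.range E → v = 0 := by
  refine eq_zero_of_mem_ker_of_mem_range F E (-Hd) ?_ ?_ ?_
  · intro v
    simp only [LinearMap.neg_apply, map_neg]
    have := hHF v
    rw [this]
    module
  · intro v
    simp only [LinearMap.neg_apply, map_neg]
    have := hHE v
    rw [this]
    module
  · intro v
    simp only [LinearMap.neg_apply]
    have := hEF v
    rw [this]
    module

/-- The whole space is spanned by the range of `E` and the kernel of `F`. -/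
lemma range_sup_ker_eq_top
    (E F Hd : Module.End ℂ V)
    (hHE : ∀ v, Hd (E v) = E (Hd v) + (2 : ℂ) • E v)
    (hHF : ∀ v, Hd (F v) = F (Hd v) - (2 : ℂ) • F v)
    (hEF : ∀ v, E (F v) = F (E v) + Hd v) :
    LinearMap.range E ⊔ LinearMap.ker F = ⊤ := by
  have d1 := eq_zero_of_mem_ker_of_mem_range' E F Hd hHE hHF hEF
  have d2 := eq_zero_of_mem_ker_of_mem_range E F Hd hHE hHF hEF
  -- ker (F ∘ E) = ker E
  have hker1 : LinearMap.ker (F ∘ₗ E) = LinearMap.ker E := by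
    apply le_antisymm
    · intro x hx
      rw [LinearMap.mem_ker] at hx ⊢
      exact d1 (E x) hx ⟨x, rfl⟩
    · intro x hx
      rw [LinearMap.mem_ker] at hx ⊢
      rw [LinearMap.comp_apply, hx, map_zero]
  have hker2 : LinearMap.ker (E ∘ₗ F) = LinearMap.ker F := by
    apply le_antisymm
    · intro x hx
      rw [LinearMap.mem_ker] at hx ⊢
      exact d2 (F x) hx ⟨x, rfl⟩
    · intro x hx
      rw [LinearMap.mem_ker] at hx ⊢
      rw [LinearMap.comp_apply, hx, map_zero]
  have hrank1 : Module.finrank ℂ (LinearMap.range E) ≤ Module.finrank ℂ (LinearMap.range F) := by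
    have h1 := LinearMap.finrank_range_add_finrank_ker (F ∘ₗ E)
    have h2 := LinearMap.finrank_range_add_finrank_ker E
    rw [hker1] at h1
    have h3 : Module.finrank ℂ (LinearMap.range (F ∘ₗ E)) = Module.finrank ℂ (LinearMap.range E) := by
      omega
    rw [← h3]
    exact Submodule.finrank_mono (LinearMap.range_comp_le_range E F)
  have hrank2 : Module.finrank ℂ (LinearMap.range F) ≤ Module.finrank ℂ (LinearMap.range E) := by
    have h1 := LinearMap.finrank_range_add_finrank_ker (E ∘ₗ F)
    have h2 := LinearMap.finrank_range_add_finrank_ker F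
    rw [hker2] at h1
    have h3 : Module.finrank ℂ (LinearMap.range (E ∘ₗ F)) = Module.finrank ℂ (LinearMap.range F) := by
      omega
    rw [← h3]
    exact Submodule.finrank_mono (LinearMap.range_comp_le_range F E)
  have hrank : Module.finrank ℂ (LinearMap.range E) = Module.finrank ℂ (LinearMap.range F) :=
    le_antisymm hrank1 hrank2
  have hinf : LinearMap.range E ⊓ LinearMap.ker F = ⊥ := by
    rw [Submodule.eq_bot_iff]
    rintro x ⟨hx1, hx2⟩
    exact d1 x (LinearMap.mem_ker.mp hx2) hx1
  apply Submodule.eq_top_of_finrank_eq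
  have hsum := Submodule.finrank_sup_add_finrank_inf_eq (LinearMap.range E) (LinearMap.ker F)
  rw [hinf] at hsum
  have hrn := LinearMap.finrank_range_add_finrank_ker F
  simp only [finrank_bot, add_zero] at hsum
  omega

end Sl2ProofAux



/-- The direct sum decomposition `𝔤 = [𝔤, X] ⊕ Z_𝔤(Y)` (Section 4) for an `sl₂`-triple
`(X,H,Y)` of `n×n` real matrices: the space of brackets `[A,X]` and the centralizer of `Y`
intersect trivially and together span the whole matrix space. -/
theorem bracket_range_isCompl_centralizer
    {n : ℕ} (X H Y : Matrix (Fin n) (Fin n) ℝ)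
    (hX0 : X ≠ 0)
    (hHX : H * X - X * H = (2 : ℝ) • X)
    (hHY : H * Y - Y * H = (-2 : ℝ) • Y)
    (hXY : X * Y - Y * X = H) :
    (∀ M : Matrix (Fin n) (Fin n) ℝ,
        (∃ A, M = A * X - X * A) → M * Y = Y * M → M = 0) ∧
    (∀ M : Matrix (Fin n) (Fin n) ℝ,
        ∃ A B : Matrix (Fin n) (Fin n) ℝ,
          B * Y = Y * B ∧ M = (A * X - X * A) + B) := by
  classical
  set toC : Matrix (Fin n) (Fin n) ℝ →+* Matrix (Fin n) (Fin n) ℂ :=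
    ((Complex.ofRealHom).mapMatrix) with htoC
  have htoC_apply : ∀ (R : Matrix (Fin n) (Fin n) ℝ) i j, toC R i j = (R i j : ℂ) := by
    intro R i j; rfl
  set Xc := toC X with hXc
  set Hc := toC H with hHc
  set Yc := toC Y with hYc
  -- complexified relations
  have hHXc : Hc * Xc - Xc * Hc = (2 : ℂ) • Xc := by
    have h := congrArg toC hHX
    rw [map_sub, map_mul, map_mul] at h
    rw [h]
    ext i j
    simp only [htoC_apply, Matrix.smul_apply, Matrix.map_apply, smul_eq_mul, hXc, hYc]
    push_cast
    ring
  have hHYc : Hc * Yc - Yc * Hc = (-2 : ℂ) • Yc := by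
    have h := congrArg toC hHY
    rw [map_sub, map_mul, map_mul] at h
    rw [h]
    ext i j
    simp only [htoC_apply, Matrix.smul_apply, Matrix.map_apply, smul_eq_mul, hXc, hYc]
    push_cast
    ring
  have hXYc : Xc * Yc - Yc * Xc = Hc := by
    have h := congrArg toC hXY
    rw [map_sub, map_mul, map_mul] at h
    exact h
  -- the three endomorphisms
  set E : Module.End ℂ (Matrix (Fin n) (Fin n) ℂ) := LinearMap.mulLeft ℂ Xc - LinearMap.mulRight ℂ Xc with hE
  set F : Module.End ℂ (Matrix (Fin n) (Fin n) ℂ) := LinearMap.mulLeft ℂ Yc - LinearMap.mulRight ℂ Yc with hF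
  set Hd : Module.End ℂ (Matrix (Fin n) (Fin n) ℂ) := LinearMap.mulLeft ℂ Hc - LinearMap.mulRight ℂ Hc with hHd
  have hEapp : ∀ A : Matrix (Fin n) (Fin n) ℂ, E A = Xc * A - A * Xc := by
    intro A
    simp [hE, LinearMap.sub_apply, LinearMap.mulLeft_apply, LinearMap.mulRight_apply]
  have hFapp : ∀ A : Matrix (Fin n) (Fin n) ℂ, F A = Yc * A - A * Yc := by
    intro A
    simp [hF, LinearMap.sub_apply, LinearMap.mulLeft_apply, LinearMap.mulRight_apply]
  have hHdapp : ∀ A : Matrix (Fin n) (Fin n) ℂ, Hd A = Hc * A - A * Hc := by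
    intro A
    simp [hHd, LinearMap.sub_apply, LinearMap.mulLeft_apply, LinearMap.mulRight_apply]
  have hHE : ∀ v : Matrix (Fin n) (Fin n) ℂ, Hd (E v) = E (Hd v) + (2 : ℂ) • E v := by
    intro v
    rw [hEapp, hEapp, hHdapp, hHdapp]
    exact Sl2ProofAux.comm_rule hHXc v
  have hHF : ∀ v : Matrix (Fin n) (Fin n) ℂ, Hd (F v) = F (Hd v) + (-2 : ℂ) • F v := by
    intro v
    rw [hFapp, hFapp, hHdapp, hHdapp]
    exact Sl2ProofAux.comm_rule hHYc v
  have hHF' : ∀ v : Matrix (Fin n) (Fin n) ℂ, Hd (F v) = F (Hd v) - (2 : ℂ) • F v := by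
    intro v
    rw [hHF v]
    module
  have hEF : ∀ v : Matrix (Fin n) (Fin n) ℂ, E (F v) = F (E v) + Hd v := by
    intro v
    rw [hEapp, hFapp, hFapp, hEapp, hHdapp]
    exact Sl2ProofAux.comm_rule2 hXYc v
  have d1 := Sl2ProofAux.eq_zero_of_mem_ker_of_mem_range' E F Hd hHE hHF' hEF
  have htop := Sl2ProofAux.range_sup_ker_eq_top E F Hd hHE hHF' hEF
  -- real parts
  set reM : Matrix (Fin n) (Fin n) ℂ → Matrix (Fin n) (Fin n) ℝ :=
    fun N => N.map Complex.re with hreM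
  have hre1 : ∀ (N : Matrix (Fin n) (Fin n) ℂ) (R : Matrix (Fin n) (Fin n) ℝ), reM (N * toC R) = reM N * R := by
    intro N R
    ext i j
    simp only [hreM, Matrix.map_apply, Matrix.mul_apply, Complex.re_sum, htoC_apply,
      Complex.mul_re, Complex.ofReal_re, Complex.ofReal_im, mul_zero, sub_zero]
  have hre2 : ∀ (R : Matrix (Fin n) (Fin n) ℝ) (N : Matrix (Fin n) (Fin n) ℂ), reM (toC R * N) = R * reM N := by
    intro R N
    ext i j
    simp only [hreM, Matrix.map_apply, Matrix.mul_apply, Complex.re_sum, htoC_apply,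
      Complex.mul_re, Complex.ofReal_re, Complex.ofReal_im, zero_mul, sub_zero]
  have hre3 : ∀ R : Matrix (Fin n) (Fin n) ℝ, reM (toC R) = R := by
    intro R
    ext i j
    simp [hreM, Matrix.map_apply, htoC_apply]
  have hreadd : ∀ N N' : Matrix (Fin n) (Fin n) ℂ, reM (N + N') = reM N + reM N' := by
    intro N N'
    ext i j
    simp [hreM, Matrix.map_apply]
  constructor
  · -- part 1
    rintro M ⟨A, hA⟩ hMY
    have hMc_range : toC M ∈ LinearMap.range E := by
      refine ⟨-(toC A), ?_⟩
      rw [hEapp]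
      have h := congrArg toC hA
      rw [map_sub, map_mul, map_mul] at h
      rw [h, hXc]
      noncomm_ring
    have hFMc : F (toC M) = 0 := by
      rw [hFapp]
      have h := congrArg toC hMY
      rw [map_mul, map_mul] at h
      rw [sub_eq_zero, ← h]
    have h0 := d1 (toC M) hFMc hMc_range
    ext i j
    have h1 := congrFun (congrFun h0 i) j
    rw [htoC_apply] at h1
    simp only [Matrix.zero_apply] at h1 ⊢
    exact_mod_cast h1
  · -- part 2
    intro M
    have hmem : toC M ∈ LinearMap.range E ⊔ LinearMap.ker F := by
      rw [htop]; trivial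
    obtain ⟨a, ⟨A, hA⟩, b, hb, hab⟩ := Submodule.mem_sup.mp hmem
    refine ⟨-(reM A), reM b, ?_, ?_⟩
    · -- centralizer condition
      have h := LinearMap.mem_ker.mp hb
      rw [hFapp, sub_eq_zero] at h
      calc reM b * Y = reM (b * Yc) := (hre1 b Y).symm
        _ = reM (Yc * b) := by rw [h]
        _ = Y * reM b := hre2 Y b
    · -- decomposition
      have h := congrArg reM hab
      rw [← hA, hEapp] at h
      have hsplit : reM (Xc * A - A * Xc + b) = (X * reM A - reM A * X) + reM b := by
        have e1 : Xc * A - A * Xc + b = toC X * A + (-(A * toC X) + b) := by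
          rw [hXc]; abel
        rw [e1, hreadd, hreadd]
        have e2 : reM (-(A * toC X)) = -(reM A * X) := by
          ext i j
          simp only [hreM, Matrix.map_apply, Matrix.neg_apply, Complex.neg_re,
            Matrix.mul_apply, Complex.re_sum, htoC_apply, Complex.mul_re,
            Complex.ofReal_re, Complex.ofReal_im, mul_zero, sub_zero]
        rw [e2, hre2]
        abel
      rw [hsplit, hre3] at h
      rw [← h]
      noncomm_ring
end

section
/- Let n, r ≥ 1 and let c : Fin n → Fin r be a monotone surjective function (so the fibers of c are consecutive blocks of {1, …, n}). Let ξ ∈ ℝ^n satisfy ξ_i = ξ_j whenever c(i) = c(j). Let P = {(i, j) : i < j and c(i) = c(j)} be the set of within-block ordered pairs and let Q = ∏_{(i,j): i < j, c(i) ≠ c(j)} (X_i − X_j), a polynomial in MvPolynomial (Fin n) ℝ. Let D be the linear operator on MvPolynomial (Fin n) ℝ obtained by composing, over all (i, j) ∈ P, the operators ∂/∂X_i − ∂/∂X_j (these operators pairwise commute, so the order of composition is immaterial). Then for every polynomial f ∈ MvPolynomial (Fin n) ℝ, evaluating at ξ: (D(Q · f))(ξ) = Q(ξ) · (D f)(ξ).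 -/
open MvPolynomial

/-- The set of within-block ordered pairs `(i,j)`, `i < j`, `c i = c j`. -/
def withinBlockPairs {n r : ℕ} (c : Fin n → Fin r) : Finset (Fin n × Fin n) :=
  Finset.univ.filter fun p : Fin n × Fin n => p.1 < p.2 ∧ c p.1 = c p.2

/-- The operator `D`, the composition over all within-block pairs `(i,j)` of the
operators `∂/∂X_i - ∂/∂X_j` (these commute, so the order of composition is
immaterial). -/
noncomputable def blockDerivOp {n r : ℕ} (c : Fin n → Fin r) :
    Module.End ℝ (MvPolynomial (Fin n) ℝ) :=
  ((withinBlockPairs c).toList.map fun p =>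
    ((MvPolynomial.pderiv p.1).toLinearMap - (MvPolynomial.pderiv p.2).toLinearMap :
      Module.End ℝ (MvPolynomial (Fin n) ℝ))).prod

/-- The polynomial `Q = ∏_{i<j, c i ≠ c j} (X_i - X_j)` (product of the cross-block
differences). -/
noncomputable def crossBlockProd {n r : ℕ} (c : Fin n → Fin r) : MvPolynomial (Fin n) ℝ :=
  ∏ p ∈ Finset.univ.filter (fun p : Fin n × Fin n => p.1 < p.2 ∧ c p.1 ≠ c p.2),
    (X p.1 - X p.2)

/-! ### Auxiliary material -/

namespace PBCAux

variable {n r : ℕ}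

theorem pderiv_pderiv_comm (i j : Fin n) (f : MvPolynomial (Fin n) ℝ) :
    pderiv i (pderiv j f) = pderiv j (pderiv i f) := by
  induction f using MvPolynomial.induction_on with
  | C a => simp
  | add p q hp hq => simp [hp, hq]
  | mul_X p k hp =>
      simp only [pderiv_mul, pderiv_X, hp, map_add, mul_add, add_mul, Pi.single_apply]
      split_ifs <;> (simp; try ring)

/-- The single difference operator `∂/∂X_{p.1} - ∂/∂X_{p.2}`. -/
noncomputable def dpOp (p : Fin n × Fin n) : Module.End ℝ (MvPolynomial (Fin n) ℝ) :=
  (pderiv p.1).toLinearMap - (pderiv p.2).toLinearMap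

lemma dpOp_apply (p : Fin n × Fin n) (f : MvPolynomial (Fin n) ℝ) :
    dpOp p f = pderiv p.1 f - pderiv p.2 f := rfl

lemma dpOp_swap (p : Fin n × Fin n) : dpOp (p.2, p.1) = - dpOp p := by
  simp [dpOp]

lemma dpOp_commute (p q : Fin n × Fin n) : Commute (dpOp p) (dpOp q) := by
  refine LinearMap.ext fun f => ?_
  simp only [Module.End.mul_apply, dpOp_apply, map_sub]
  rw [pderiv_pderiv_comm, pderiv_pderiv_comm p.1 q.2, pderiv_pderiv_comm p.2 q.1,
    pderiv_pderiv_comm p.2 q.2]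
  abel

lemma dpOp_leibniz (p : Fin n × Fin n) (a b : MvPolynomial (Fin n) ℝ) :
    dpOp p (a * b) = a * dpOp p b + b * dpOp p a := by
  simp only [dpOp_apply, pderiv_mul]; ring

lemma blockDerivOp_eq (c : Fin n → Fin r) :
    blockDerivOp c = ((withinBlockPairs c).toList.map dpOp).prod := rfl

/-! #### Order of vanishing -/

lemma dpOp_mem_pow (ξ : Fin n → ℝ) (p : Fin n × Fin n) :
    ∀ (k : ℕ) (h : MvPolynomial (Fin n) ℝ),
      h ∈ (RingHom.ker (eval ξ)) ^ (k + 1) → dpOp p h ∈ (RingHom.ker (eval ξ)) ^ k := by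
  intro k
  induction k with
  | zero => intro h _; simp
  | succ k ih =>
      intro h hh
      rw [pow_succ] at hh
      refine Submodule.mul_induction_on hh (fun a ha b hb => ?_) (fun x y hx hy => ?_)
      · rw [dpOp_leibniz]
        refine Ideal.add_mem _ ?_ ?_
        · exact Ideal.mul_mem_right _ _ ha
        · have : dpOp p a ∈ (RingHom.ker (eval ξ)) ^ k := ih a ha
          have h2 : dpOp p a * b ∈ (RingHom.ker (eval ξ)) ^ k * (RingHom.ker (eval ξ)) :=
            Ideal.mul_mem_mul this hb
          rw [← pow_succ] at h2
          rwa [mul_comm b]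
      · rw [map_add]; exact Ideal.add_mem _ hx hy

lemma listProd_mem_pow (ξ : Fin n → ℝ) :
    ∀ (L : List (Fin n × Fin n)) (j : ℕ) (h : MvPolynomial (Fin n) ℝ),
      h ∈ (RingHom.ker (eval ξ)) ^ (L.length + j) →
        (L.map dpOp).prod h ∈ (RingHom.ker (eval ξ)) ^ j := by
  intro L
  induction L with
  | nil => intro j h hh; simpa using hh
  | cons p L ih =>
      intro j h hh
      have h1 : (L.map dpOp).prod h ∈ (RingHom.ker (eval ξ)) ^ (j + 1) := by
        refine ih (j + 1) h ?_
        have : L.length + (j + 1) = (p :: L).length + j := by simp [List.length_cons]; ring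
        rwa [this]
      have := dpOp_mem_pow ξ p j _ h1
      simpa [List.map_cons, List.prod_cons, Module.End.mul_apply] using this

/-! #### Rename commutation -/

lemma dpOp_rename (τ : Equiv.Perm (Fin n)) (p : Fin n × Fin n) (h : MvPolynomial (Fin n) ℝ) :
    dpOp (τ p.1, τ p.2) (rename τ h) = rename τ (dpOp p h) := by
  simp only [dpOp_apply, map_sub]
  rw [pderiv_rename τ.injective, pderiv_rename τ.injective]

lemma listProd_rename (τ : Equiv.Perm (Fin n)) :
    ∀ (L : List (Fin n × Fin n)) (h : MvPolynomial (Fin n) ℝ),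
      ((L.map fun p => dpOp (τ p.1, τ p.2)).prod) (rename τ h)
        = rename τ ((L.map dpOp).prod h) := by
  intro L
  induction L with
  | nil => intro h; simp
  | cons p L ih =>
      intro h
      simp only [List.map_cons, List.prod_cons, Module.End.mul_apply]
      rw [ih h, dpOp_rename]

lemma listProd_smul {A : Type*} [Ring A] [Algebra ℝ A] {ι : Type*} (s : ι → ℝ) (e : ι → A) :
    ∀ (L : List ι), (L.map fun p => s p • e p).prod = (L.map s).prod • (L.map e).prod := by
  intro L
  induction L with
  | nil => simp
  | cons p L ih =>
      simp only [List.map_cons, List.prod_cons, ih, smul_mul_assoc, mul_smul_comm, smul_smul,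
        mul_comm]

/-! #### Block combinatorics -/

lemma lt_of_c_lt {c : Fin n → Fin r} (hc : Monotone c) {x y : Fin n} (h : c x < c y) : x < y := by
  by_contra h'
  exact absurd (hc (not_lt.mp h')) (not_le.mpr h)

lemma c_swap {c : Fin n → Fin r} {a b : Fin n} (hcab : c a = c b) (x : Fin n) :
    c (Equiv.swap a b x) = c x := by
  rcases eq_or_ne x a with rfl | hxa
  · rw [Equiv.swap_apply_left]; exact hcab.symm
  rcases eq_or_ne x b with rfl | hxb
  · rw [Equiv.swap_apply_right]; exact hcab
  · rw [Equiv.swap_apply_of_ne_of_ne hxa hxb]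

lemma c_interval {c : Fin n → Fin r} (hc : Monotone c) {a b : Fin n} (hcab : c a = c b)
    {x : Fin n} (h1 : a ≤ x) (h2 : x ≤ b) : c x = c a :=
  le_antisymm (hcab ▸ hc h2) (hc h1)

lemma flipped_eq {c : Fin n → Fin r} (hc : Monotone c) {a b : Fin n} (hab : a < b)
    (hcab : c a = c b) :
    (withinBlockPairs c).filter
        (fun p => ¬ (Equiv.swap a b p.1 < Equiv.swap a b p.2)) =
      (((Finset.Ioo a b).image fun y => (a, y)) ∪
        ((Finset.Ioo a b).image fun x => (x, b))) ∪ {(a, b)} := by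
  have hτa : Equiv.swap a b a = b := Equiv.swap_apply_left a b
  have hτb : Equiv.swap a b b = a := Equiv.swap_apply_right a b
  ext ⟨x, y⟩
  simp only [withinBlockPairs, Finset.mem_filter, Finset.mem_union, Finset.mem_image,
    Finset.mem_Ioo, Finset.mem_singleton, Finset.mem_univ, true_and, Prod.mk.injEq]
  constructor
  · rintro ⟨⟨hxy, hcxy⟩, hflip⟩
    rw [not_lt] at hflip
    rcases eq_or_ne x a with rfl | hxa
    · rcases eq_or_ne y b with rfl | hyb
      · right; exact ⟨rfl, rfl⟩
      · left; left
        refine ⟨y, ⟨hxy, ?_⟩, rfl, rfl⟩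
        rw [hτa, Equiv.swap_apply_of_ne_of_ne (ne_of_gt hxy) hyb] at hflip
        exact lt_of_le_of_ne hflip hyb
    · rcases eq_or_ne y b with rfl | hyb
      · left; right
        refine ⟨x, ⟨?_, hxy⟩, rfl, rfl⟩
        by_contra hax
        push_neg at hax
        have hxa' : x < a := lt_of_le_of_ne hax hxa
        rw [hτb, Equiv.swap_apply_of_ne_of_ne hxa (ne_of_lt (lt_trans hxa' hab))] at hflip
        exact absurd hflip (not_le.mpr hxa')
      · exfalso
        rcases eq_or_ne x b with rfl | hxb
        · have hya : y ≠ a := ne_of_gt (lt_trans hab hxy)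
          rw [hτb, Equiv.swap_apply_of_ne_of_ne hya hyb] at hflip
          exact absurd hflip (not_le.mpr (lt_trans hab hxy))
        rcases eq_or_ne y a with rfl | hya
        · rw [hτa, Equiv.swap_apply_of_ne_of_ne hxa hxb] at hflip
          exact absurd hflip (not_le.mpr (lt_trans hxy hab))
        · rw [Equiv.swap_apply_of_ne_of_ne hxa hxb,
            Equiv.swap_apply_of_ne_of_ne hya hyb] at hflip
          exact absurd hflip (not_le.mpr hxy)
  · rintro ((⟨y', ⟨h1, h2⟩, hx, hy⟩ | ⟨x', ⟨h1, h2⟩, hx, hy⟩) | ⟨hx, hy⟩)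
    · subst hx; subst hy
      refine ⟨⟨h1, (c_interval hc hcab h1.le h2.le).symm⟩, ?_⟩
      rw [hτa, Equiv.swap_apply_of_ne_of_ne (ne_of_gt h1) (ne_of_lt h2)]
      exact not_lt.mpr h2.le
    · subst hx; subst hy
      refine ⟨⟨h2, (c_interval hc hcab h1.le h2.le).trans hcab⟩, ?_⟩
      rw [hτb, Equiv.swap_apply_of_ne_of_ne (ne_of_gt h1) (ne_of_lt h2)]
      exact not_lt.mpr h1.le
    · subst hx; subst hy
      exact ⟨⟨hab, hcab⟩, by rw [hτa, hτb]; exact not_lt.mpr hab.le⟩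

lemma card_flipped (c : Fin n → Fin r) (hc : Monotone c) {a b : Fin n} (hab : a < b)
    (hcab : c a = c b) :
    ∃ k, ((withinBlockPairs c).filter
        (fun p => ¬ (Equiv.swap a b p.1 < Equiv.swap a b p.2))).card = 2 * k + 1 := by
  rw [flipped_eq hc hab hcab]
  refine ⟨(Finset.Ioo a b).card, ?_⟩
  have hinj1 : Function.Injective (fun y : Fin n => (a, y)) :=
    fun u v h => (Prod.mk.injEq _ _ _ _).mp h |>.2
  have hinj2 : Function.Injective (fun x : Fin n => (x, b)) :=
    fun u v h => (Prod.mk.injEq _ _ _ _).mp h |>.1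
  have d1 : Disjoint ((Finset.Ioo a b).image fun y => (a, y))
      ((Finset.Ioo a b).image fun x => (x, b)) := by
    rw [Finset.disjoint_left]
    rintro p hp1 hp2
    obtain ⟨y', hy', rfl⟩ := Finset.mem_image.mp hp1
    obtain ⟨x', hx', h⟩ := Finset.mem_image.mp hp2
    have := (Prod.mk.injEq _ _ _ _).mp h |>.2
    exact absurd this.symm (ne_of_lt (Finset.mem_Ioo.mp hy').2)
  have d2 : Disjoint (((Finset.Ioo a b).image fun y => (a, y)) ∪
      ((Finset.Ioo a b).image fun x => (x, b))) ({(a, b)} : Finset (Fin n × Fin n)) := by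
    rw [Finset.disjoint_right]
    rintro p hp hpu
    rw [Finset.mem_singleton] at hp
    subst hp
    rcases Finset.mem_union.mp hpu with h | h
    · obtain ⟨y', hy', h⟩ := Finset.mem_image.mp h
      have := (Prod.mk.injEq _ _ _ _).mp h |>.2
      exact absurd this (ne_of_lt (Finset.mem_Ioo.mp hy').2)
    · obtain ⟨x', hx', h⟩ := Finset.mem_image.mp h
      have := (Prod.mk.injEq _ _ _ _).mp h |>.1
      exact absurd this (ne_of_lt (Finset.mem_Ioo.mp hx').1).symm
  rw [Finset.card_union_of_disjoint d2, Finset.card_union_of_disjoint d1,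
    Finset.card_image_of_injective _ hinj1, Finset.card_image_of_injective _ hinj2,
    Finset.card_singleton]
  ring

lemma listProd_swap_eq_neg (c : Fin n → Fin r) (hc : Monotone c) {a b : Fin n} (hab : a < b)
    (hcab : c a = c b) :
    (((withinBlockPairs c).toList).map fun p =>
        dpOp (Equiv.swap a b p.1, Equiv.swap a b p.2)).prod
      = -(((withinBlockPairs c).toList).map dpOp).prod := by
  set τ := Equiv.swap a b with hτ
  set P := withinBlockPairs c with hP
  set ρ : Fin n × Fin n → Fin n × Fin n :=
    fun p => if τ p.1 < τ p.2 then (τ p.1, τ p.2) else (τ p.2, τ p.1) with hρ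
  set s : Fin n × Fin n → ℝ := fun p => if τ p.1 < τ p.2 then 1 else -1 with hs
  have step1 : ∀ p : Fin n × Fin n, dpOp (τ p.1, τ p.2) = s p • dpOp (ρ p) := by
    intro p
    by_cases h : τ p.1 < τ p.2
    · show dpOp (τ p.1, τ p.2) = (if τ p.1 < τ p.2 then (1:ℝ) else -1) •
        dpOp (if τ p.1 < τ p.2 then (τ p.1, τ p.2) else (τ p.2, τ p.1))
      rw [if_pos h, if_pos h, one_smul]
    · show dpOp (τ p.1, τ p.2) = (if τ p.1 < τ p.2 then (1:ℝ) else -1) •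
        dpOp (if τ p.1 < τ p.2 then (τ p.1, τ p.2) else (τ p.2, τ p.1))
      rw [if_neg h, if_neg h]
      rw [show ((τ p.1, τ p.2) : Fin n × Fin n) = ((τ p.2, τ p.1).2, (τ p.2, τ p.1).1) from rfl,
        dpOp_swap]
      exact (neg_one_smul ℝ _).symm
  have step2 : (P.toList.map fun p => dpOp (τ p.1, τ p.2))
      = P.toList.map (fun p => s p • dpOp (ρ p)) := by
    exact List.map_congr_left fun p _ => step1 p
  have hmemP : ∀ p : Fin n × Fin n, p ∈ P ↔ p.1 < p.2 ∧ c p.1 = c p.2 := by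
    intro p; simp [hP, withinBlockPairs]
  have hρP : ∀ p ∈ P, ρ p ∈ P := by
    intro p hp
    obtain ⟨h1, h2⟩ := (hmemP p).mp hp
    by_cases h : τ p.1 < τ p.2
    · rw [hmemP]; simp only [hρ, if_pos h]
      exact ⟨h, by rw [c_swap hcab, c_swap hcab]; exact h2⟩
    · rw [hmemP]; simp only [hρ, if_neg h]
      have hne : τ p.1 ≠ τ p.2 := fun hh => (ne_of_lt h1) (τ.injective hh)
      refine ⟨lt_of_le_of_ne (not_lt.mp h) hne.symm, ?_⟩
      rw [c_swap hcab, c_swap hcab]; exact h2.symm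
  have hρρ : ∀ p : Fin n × Fin n, p.1 < p.2 → ρ (ρ p) = p := by
    rintro ⟨x, y⟩ hxy
    have hτττ : ∀ z, τ (τ z) = z := fun z => Equiv.swap_apply_self a b z
    by_cases h : τ x < τ y
    · simp only [hρ, if_pos h, hτττ, if_pos hxy]
    · simp only [hρ, if_neg h, hτττ]
      rw [if_neg (not_lt.mpr hxy.le)]
  have hinj : Set.InjOn ρ P := by
    intro p hp q hq hpq
    rw [← hρρ p ((hmemP p).mp hp).1, ← hρρ q ((hmemP q).mp hq).1, hpq]
  have himage : Finset.image ρ P = P := by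
    apply Finset.eq_of_subset_of_card_le
    · intro q hq
      obtain ⟨p, hp, rfl⟩ := Finset.mem_image.mp hq
      exact hρP p hp
    · rw [Finset.card_image_of_injOn hinj]
  have hperm : (P.toList.map ρ).Perm P.toList := by
    rw [← Multiset.coe_eq_coe]
    push_cast [Finset.coe_toList]
    rw [show ((P.toList.map ρ : List _) : Multiset _) = Multiset.map ρ ↑P.toList from rfl]
    rw [Finset.coe_toList]
    rw [← Finset.image_val_of_injOn hinj, himage]
  have hpair : ((P.toList.map ρ).map dpOp).Pairwise Commute := by
    apply List.pairwise_of_forall_mem_list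
    intro u hu v hv
    obtain ⟨pu, _, rfl⟩ := List.mem_map.mp hu
    obtain ⟨pv, _, rfl⟩ := List.mem_map.mp hv
    exact dpOp_commute pu pv
  have step3 : ((P.toList.map ρ).map dpOp).prod = (P.toList.map dpOp).prod :=
    (hperm.map dpOp).prod_eq' hpair
  have step4 : (P.toList.map s).prod = -1 := by
    rw [Finset.prod_map_toList]
    rw [hs]
    rw [Finset.prod_ite (fun _ => (1:ℝ)) (fun _ => (-1:ℝ))]
    rw [Finset.prod_const, Finset.prod_const, one_pow, one_mul]
    obtain ⟨k, hk⟩ := card_flipped c hc hab hcab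
    rw [hk]
    exact Odd.neg_one_pow ⟨k, by ring⟩
  rw [step2, listProd_smul s (fun p => dpOp (ρ p)), step4]
  have : (List.map (fun p => dpOp (ρ p)) P.toList) = List.map dpOp (List.map ρ P.toList) := by
    rw [List.map_map]; rfl
  rw [this, step3]
  simp

/-! #### Counting -/

lemma sum_distinct_ge (s : Finset ℕ) : ∑ k ∈ Finset.range s.card, k ≤ ∑ x ∈ s, x := by
  induction s using Finset.strongInduction with
  | _ s ih =>
    rcases s.eq_empty_or_nonempty with rfl | hne
    · simp
    · have hM : s.max' hne ∈ s := s.max'_mem hne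
      have h1 : s.card ≤ s.max' hne + 1 := by
        have hsub : s ⊆ Finset.range (s.max' hne + 1) :=
          fun x hx => Finset.mem_range.mpr (Nat.lt_succ_of_le (s.le_max' x hx))
        simpa using Finset.card_le_card hsub
      have h2 := ih (s.erase (s.max' hne)) (Finset.erase_ssubset hM)
      have hcard : (s.erase (s.max' hne)).card = s.card - 1 := Finset.card_erase_of_mem hM
      have hsum : ∑ x ∈ s, x = s.max' hne + ∑ x ∈ s.erase (s.max' hne), x :=
        (Finset.add_sum_erase _ _ hM).symm
      obtain ⟨m, hm⟩ : ∃ m, s.card = m + 1 := ⟨s.card - 1, by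
        have := Finset.card_pos.mpr hne; omega⟩
      rw [hm, Finset.sum_range_succ, hsum]
      rw [hcard, hm] at h2
      simp only [Nat.add_sub_cancel] at h2
      have hmM : m ≤ s.max' hne := by omega
      omega

lemma block_pairs_card_le (B : Finset (Fin n)) (α : Fin n → ℕ) (hinj : Set.InjOn α B) :
    ((B ×ˢ B).filter fun p : Fin n × Fin n => p.1 < p.2).card ≤ ∑ i ∈ B, α i := by
  set m := B.card with hm
  set L := ((B ×ˢ B).filter fun p : Fin n × Fin n => p.1 < p.2).card with hL
  have hsum1 : ∑ x ∈ B.image α, x = ∑ i ∈ B, α i := by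
    rw [Finset.sum_image (fun x hx y hy h => hinj hx hy h)]
  have hcard1 : (B.image α).card = m := Finset.card_image_of_injOn hinj
  have hlow : ∑ k ∈ Finset.range m, k ≤ ∑ i ∈ B, α i := by
    rw [← hsum1, ← hcard1]; exact sum_distinct_ge _
  have hgauss : (∑ k ∈ Finset.range m, k) * 2 = m * (m - 1) := Finset.sum_range_id_mul_two m
  have hLG : ((B ×ˢ B).filter fun p : Fin n × Fin n => p.1 < p.2).card
      = ((B ×ˢ B).filter fun p : Fin n × Fin n => p.2 < p.1).card := by
    refine Finset.card_bij' (fun p _ => (p.2, p.1)) (fun p _ => (p.2, p.1)) ?_ ?_ ?_ ?_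
    · rintro ⟨x, y⟩ hp
      simp only [Finset.mem_filter, Finset.mem_product] at hp ⊢
      exact ⟨⟨hp.1.2, hp.1.1⟩, hp.2⟩
    · rintro ⟨x, y⟩ hp
      simp only [Finset.mem_filter, Finset.mem_product] at hp ⊢
      exact ⟨⟨hp.1.2, hp.1.1⟩, hp.2⟩
    · rintro ⟨x, y⟩ _; rfl
    · rintro ⟨x, y⟩ _; rfl
  have hdiag : ((B ×ˢ B).filter fun p : Fin n × Fin n => ¬ p.1 < p.2).filter
      (fun p => p.1 = p.2) = B.image (fun x => (x, x)) := by
    ext ⟨x, y⟩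
    simp only [Finset.mem_filter, Finset.mem_product, Finset.mem_image]
    constructor
    · rintro ⟨⟨⟨hx, _⟩, _⟩, h⟩
      exact ⟨x, hx, by simp [h]⟩
    · rintro ⟨z, hz, h⟩
      obtain ⟨rfl, rfl⟩ := Prod.mk.injEq _ _ _ _ |>.mp h
      exact ⟨⟨⟨hz, hz⟩, lt_irrefl _⟩, rfl⟩
  have hgt : ((B ×ˢ B).filter fun p : Fin n × Fin n => ¬ p.1 < p.2).filter
      (fun p => ¬ p.1 = p.2) = (B ×ˢ B).filter fun p : Fin n × Fin n => p.2 < p.1 := by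
    ext ⟨x, y⟩
    simp only [Finset.mem_filter, Finset.mem_product]
    constructor
    · rintro ⟨⟨⟨hx, hy⟩, hnlt⟩, hne⟩
      exact ⟨⟨hx, hy⟩, lt_of_le_of_ne (not_lt.mp hnlt) (fun h => hne h.symm)⟩
    · rintro ⟨⟨hx, hy⟩, hlt⟩
      exact ⟨⟨⟨hx, hy⟩, not_lt.mpr hlt.le⟩, fun h => absurd hlt (h ▸ lt_irrefl _)⟩
  have htot : L + ((B ×ˢ B).filter fun p : Fin n × Fin n => ¬ p.1 < p.2).card = m * m := by
    rw [hL]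
    rw [Finset.card_filter_add_card_filter_not]
    rw [Finset.card_product]
  have hsplit : ((B ×ˢ B).filter fun p : Fin n × Fin n => ¬ p.1 < p.2).card = m + L := by
    rw [← Finset.card_filter_add_card_filter_not
      (s := (B ×ˢ B).filter fun p : Fin n × Fin n => ¬ p.1 < p.2) (p := fun p => p.1 = p.2)]
    rw [hdiag, hgt, Finset.card_image_of_injective _
      (fun u v h => (Prod.mk.injEq _ _ _ _).mp h |>.1), ← hLG]
  have hmm : m * (m - 1) = m * m - m := by
    cases m with
    | zero => simp
    | succ k => simp [Nat.succ_sub_one]; ring_nf; omega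
  omega

lemma withinBlockPairs_card_le (c : Fin n → Fin r) (α : Fin n → ℕ)
    (hinj : ∀ x y : Fin n, c x = c y → x ≠ y → α x ≠ α y) :
    (withinBlockPairs c).card ≤ ∑ i, α i := by
  classical
  have hfib : (withinBlockPairs c).card
      = ∑ k : Fin r, ((withinBlockPairs c).filter fun p => c p.1 = k).card :=
    Finset.card_eq_sum_card_fiberwise (fun p _ => Finset.mem_univ (c p.1))
  have hsumfib : ∑ i, α i = ∑ k : Fin r, ∑ i ∈ Finset.univ.filter fun i => c i = k, α i :=
    (Finset.sum_fiberwise Finset.univ c α).symm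
  rw [hfib, hsumfib]
  apply Finset.sum_le_sum
  intro k _
  set B := Finset.univ.filter fun i => c i = k with hB
  have heq : (withinBlockPairs c).filter (fun p => c p.1 = k)
      = (B ×ˢ B).filter fun p : Fin n × Fin n => p.1 < p.2 := by
    ext ⟨x, y⟩
    simp only [withinBlockPairs, hB, Finset.mem_filter, Finset.mem_product, Finset.mem_univ,
      true_and]
    constructor
    · rintro ⟨⟨h1, h2⟩, h3⟩
      exact ⟨⟨h3, h2 ▸ h3⟩, h1⟩
    · rintro ⟨⟨h1, h2⟩, h3⟩
      exact ⟨⟨h3, h1.trans h2.symm⟩, h1⟩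
  rw [heq]
  apply block_pairs_card_le
  intro x hx y hy hxy
  by_contra hne'
  have hxB : c x = k := (Finset.mem_filter.mp hx).2
  have hyB : c y = k := (Finset.mem_filter.mp hy).2
  exact hinj x y (hxB.trans hyB.symm) hne' hxy

/-! #### Invariance of `Q` -/

lemma crossBlockProd_swap_invariant {c : Fin n → Fin r} (hc : Monotone c) {a b : Fin n}
    (hab : a < b) (hcab : c a = c b) :
    rename (Equiv.swap a b) (crossBlockProd c) = crossBlockProd c := by
  set τ := Equiv.swap a b with hτ
  set E := Finset.univ.filter (fun p : Fin n × Fin n => p.1 < p.2 ∧ c p.1 ≠ c p.2) with hE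
  have hmemE : ∀ p : Fin n × Fin n, p ∈ E ↔ p.1 < p.2 ∧ c p.1 ≠ c p.2 := by
    intro p; simp [hE]
  have hlt' : ∀ p : Fin n × Fin n, p ∈ E → c p.1 < c p.2 := by
    intro p hp
    obtain ⟨h1, h2⟩ := (hmemE p).mp hp
    exact lt_of_le_of_ne (hc h1.le) h2
  have hmap : ∀ p : Fin n × Fin n, p ∈ E → ((τ p.1, τ p.2) : Fin n × Fin n) ∈ E := by
    intro p hp
    have hcp : c (τ p.1) < c (τ p.2) := by rw [c_swap hcab, c_swap hcab]; exact hlt' p hp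
    exact (hmemE _).mpr ⟨lt_of_c_lt hc hcp, ne_of_lt hcp⟩
  have h1 : rename τ (crossBlockProd c) = ∏ p ∈ E, (X (τ p.1) - X (τ p.2)) := by
    rw [crossBlockProd, ← hE, map_prod]
    exact Finset.prod_congr rfl fun p _ => by rw [map_sub, rename_X, rename_X]
  rw [h1, crossBlockProd, ← hE]
  refine Finset.prod_nbij' (fun p => (τ p.1, τ p.2)) (fun p => (τ p.1, τ p.2))
    hmap hmap ?_ ?_ ?_
  · intro p _; simp [hτ]
  · intro p _; simp [hτ]
  · intro p _; rfl

/-! #### Skewness of the evaluated operator -/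

lemma eval_blockDerivOp_rename_swap (c : Fin n → Fin r) (hc : Monotone c)
    (ξ : Fin n → ℝ) (hξ : ∀ i j, c i = c j → ξ i = ξ j)
    {a b : Fin n} (hab : a < b) (hcab : c a = c b) (h : MvPolynomial (Fin n) ℝ) :
    eval ξ (blockDerivOp c (rename (Equiv.swap a b) h))
      = - eval ξ (blockDerivOp c h) := by
  have h1 := listProd_rename (Equiv.swap a b) (withinBlockPairs c).toList h
  rw [listProd_swap_eq_neg c hc hab hcab] at h1
  rw [LinearMap.neg_apply] at h1
  have h2 : blockDerivOp c (rename (Equiv.swap a b) h)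
      = - rename (Equiv.swap a b) (blockDerivOp c h) := by
    rw [blockDerivOp_eq, ← h1, neg_neg]
  rw [h2, map_neg]
  congr 1
  rw [eval_rename]
  have hcomp : ξ ∘ (Equiv.swap a b) = ξ := by
    funext x
    exact hξ _ _ (c_swap hcab x)
  rw [hcomp]

end PBCAux

open PBCAux in
/-- Lemma 3.3 of the paper, `[∂(π_L), π^∨_{G/L}](ξ) = 0`, for `𝔤 = 𝔤𝔩(n,ℝ)`: if `D` is
the composition of the operators `∂/∂X_i - ∂/∂X_j` over within-block pairs `(i,j)` of a
block decomposition `c`, `Q` is the product of the cross-block differences `X_i - X_j`,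
and `ξ` is constant on blocks, then `(D(Q·f))(ξ) = Q(ξ) · (Df)(ξ)` for every
polynomial `f`. -/
theorem pderiv_block_commutes_with_cross_product
    {n r : ℕ} (hn : 1 ≤ n) (hr : 1 ≤ r)
    (c : Fin n → Fin r) (hc : Monotone c) (hcs : Function.Surjective c)
    (ξ : Fin n → ℝ) (hξ : ∀ i j, c i = c j → ξ i = ξ j)
    (f : MvPolynomial (Fin n) ℝ) :
    MvPolynomial.eval ξ (blockDerivOp c (crossBlockProd c * f))
      = MvPolynomial.eval ξ (crossBlockProd c) *
          MvPolynomial.eval ξ (blockDerivOp c f) := by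
  classical
  set m : Ideal (MvPolynomial (Fin n) ℝ) := RingHom.ker (eval ξ) with hm
  set Q : MvPolynomial (Fin n) ℝ := crossBlockProd c with hQ
  set D := blockDerivOp c with hD
  set Rp : MvPolynomial (Fin n) ℝ := Q - C (eval ξ Q) with hR
  have key : ∀ g : MvPolynomial (Fin n) ℝ, eval ξ (D (Rp * g)) = 0 := by
    set T : MvPolynomial (Fin n) ℝ →ₐ[ℝ] MvPolynomial (Fin n) ℝ :=
      aeval (fun i => X i - C (ξ i)) with hT
    set Tinv : MvPolynomial (Fin n) ℝ →ₐ[ℝ] MvPolynomial (Fin n) ℝ :=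
      aeval (fun i => X i + C (ξ i)) with hTinv
    have hTT : ∀ g : MvPolynomial (Fin n) ℝ, T (Tinv g) = g := by
      intro g
      have hcomp : T.comp Tinv = AlgHom.id ℝ (MvPolynomial (Fin n) ℝ) := by
        apply MvPolynomial.algHom_ext
        intro i
        simp [hT, hTinv]
      calc T (Tinv g) = (T.comp Tinv) g := rfl
        _ = g := by rw [hcomp]; simp
    have main : ∀ g : MvPolynomial (Fin n) ℝ, eval ξ (D (Rp * T g)) = 0 := by
      intro g
      induction g using MvPolynomial.induction_on' with
      | add p q hp hq => simp only [map_add, mul_add, hp, hq, add_zero]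
      | monomial u rc =>
        set gu : MvPolynomial (Fin n) ℝ := ∏ i : Fin n, (X i - C (ξ i)) ^ u i with hgu
        have hTm : T (monomial u rc) = C rc * gu := by
          rw [hT, aeval_monomial, Finsupp.prod]
          rw [show (algebraMap ℝ (MvPolynomial (Fin n) ℝ)) rc = C rc from rfl]
          congr 1
          rw [hgu]
          refine Finset.prod_subset (Finset.subset_univ _) ?_
          intro x _ hx
          rw [Finsupp.notMem_support_iff.mp hx, pow_zero]
        rw [hTm]
        by_cases hex : ∃ a b : Fin n, a < b ∧ c a = c b ∧ u a = u b
        · obtain ⟨a, b, hab, hcab, huab⟩ := hex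
          have hgu_inv : rename (Equiv.swap a b) gu = gu := by
            rw [hgu, map_prod]
            have hstep : ∀ i : Fin n, rename (Equiv.swap a b) ((X i - C (ξ i)) ^ u i)
                = (X (Equiv.swap a b i) - C (ξ (Equiv.swap a b i)))
                    ^ (u (Equiv.swap a b i)) := by
              intro i
              rw [map_pow, map_sub, rename_X, rename_C]
              have hξi : ξ i = ξ (Equiv.swap a b i) := hξ _ _ (c_swap hcab i).symm
              have hui : u i = u (Equiv.swap a b i) := by
                rcases eq_or_ne i a with rfl | hia
                · rw [Equiv.swap_apply_left]; exact huab
                rcases eq_or_ne i b with rfl | hib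
                · rw [Equiv.swap_apply_right]; exact huab.symm
                · rw [Equiv.swap_apply_of_ne_of_ne hia hib]
              rw [← hξi, ← hui]
            calc ∏ i, rename (Equiv.swap a b) ((X i - C (ξ i)) ^ u i)
                = ∏ i, (X (Equiv.swap a b i) - C (ξ (Equiv.swap a b i)))
                    ^ u (Equiv.swap a b i) := Finset.prod_congr rfl fun i _ => hstep i
              _ = ∏ i, (X i - C (ξ i)) ^ u i :=
                  Equiv.prod_comp (Equiv.swap a b) (fun j => (X j - C (ξ j)) ^ u j)
          have hRp_inv : rename (Equiv.swap a b) Rp = Rp := by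
            rw [hR, map_sub, rename_C, hQ, crossBlockProd_swap_invariant hc hab hcab]
          have hx_inv : rename (Equiv.swap a b) (Rp * (C rc * gu)) = Rp * (C rc * gu) := by
            rw [map_mul, map_mul, rename_C, hRp_inv, hgu_inv]
          have hskew := eval_blockDerivOp_rename_swap c hc ξ hξ hab hcab (Rp * (C rc * gu))
          rw [hx_inv, ← hD] at hskew
          linarith [hskew]
        · push_neg at hex
          have hinj : ∀ x y : Fin n, c x = c y → x ≠ y → (u x : ℕ) ≠ u y := by
            intro x y hcxy hne
            rcases lt_or_gt_of_ne hne with h | h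
            · exact hex x y h hcxy
            · exact fun heq => hex y x h hcxy.symm heq.symm
          have hcard : (withinBlockPairs c).card ≤ ∑ i, u i := by
            simpa using withinBlockPairs_card_le c (fun i => u i) hinj
          have hXmem : ∀ i : Fin n, (X i - C (ξ i) : MvPolynomial (Fin n) ℝ) ∈ m := by
            intro i; rw [hm, RingHom.mem_ker, map_sub, eval_X, eval_C, sub_self]
          have hgum : gu ∈ m ^ (∑ i, u i) := by
            rw [hgu, ← Finset.prod_pow_eq_pow_sum]
            exact Ideal.prod_mem_prod fun i _ => Ideal.pow_mem_pow (hXmem i) _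
          have hRm : Rp ∈ m := by
            rw [hm, RingHom.mem_ker, hR, map_sub, eval_C, sub_self]
          have hmul : Rp * (C rc * gu) ∈ m ^ ((withinBlockPairs c).card + 1) := by
            have h1 : gu * Rp ∈ m ^ (∑ i, u i) * m := Ideal.mul_mem_mul hgum hRm
            rw [← pow_succ] at h1
            have h2 : Rp * (C rc * gu) = C rc * (gu * Rp) := by ring
            have h3 : m ^ (∑ i, u i + 1) ≤ m ^ ((withinBlockPairs c).card + 1) :=
              Ideal.pow_le_pow_right (by omega)
            rw [h2]
            exact Ideal.mul_mem_left _ _ (h3 h1)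
          have hfinal : D (Rp * (C rc * gu)) ∈ m := by
            have hlist := listProd_mem_pow ξ (withinBlockPairs c).toList 1 (Rp * (C rc * gu))
              (by rw [Finset.length_toList, ← hm]; exact hmul)
            rw [pow_one] at hlist
            rw [hD, blockDerivOp_eq, hm]
            exact hlist
          rw [hm, RingHom.mem_ker] at hfinal
          exact hfinal
    intro g
    have := main (Tinv g)
    rwa [hTT g] at this
  have hsplit : Q * f = Rp * f + C (eval ξ Q) * f := by rw [hR]; ring
  rw [hsplit, map_add, map_add, key f, zero_add]
  rw [show (C (eval ξ Q) * f : MvPolynomial (Fin n) ℝ) = eval ξ Q • f from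
    (smul_eq_C_mul f (eval ξ Q)).symm ▸ rfl]
  rw [map_smul]
  rw [smul_eq_C_mul, map_mul, eval_C]
end

section
/- Let n, r ≥ 1 and let c : Fin n → Fin r be a monotone function. Let W = {σ ∈ Perm(Fin n) : c ∘ σ = c} be the group of permutations preserving each block (fiber of c), acting on MvPolynomial (Fin n) ℝ by permuting the variables, and let sign(σ) denote the sign of the permutation σ. Let P = {(i, j) : i < j and c(i) = c(j)} be the set of within-block ordered pairs, and for a subset T ⊆ P write π_T = ∏_{(i,j) ∈ T} (X_i − X_j). Then: (a) for every nonempty subset S ⊆ P, the polynomial ∑_{σ ∈ W} sign(σ) · σ·(π_{P∖S}) is zero; and (b) ∑_{σ ∈ W} sign(σ) · σ·(π_P) = |W| · π_P. -/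
open MvPolynomial Finset


private lemma aux_sum_range_le (t : Finset ℕ) : ∑ i ∈ Finset.range t.card, i ≤ ∑ v ∈ t, v := by
  induction t using Finset.induction_on_max with
  | empty => simp
  | insert a s ha ih =>
    have hmem : a ∉ s := fun h => lt_irrefl a (ha a h)
    have hs : s ⊆ Finset.range a := fun x hx => Finset.mem_range.2 (ha x hx)
    have hcard : s.card ≤ a := by simpa using Finset.card_le_card hs
    rw [Finset.card_insert_of_notMem hmem, Finset.sum_range_succ, Finset.sum_insert hmem]
    omega

private lemma aux_sum_range_le_of_injOn {α : Type*} [DecidableEq α] (s : Finset α) (m : α → ℕ)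
    (hm : ∀ x ∈ s, ∀ y ∈ s, m x = m y → x = y) :
    ∑ i ∈ Finset.range s.card, i ≤ ∑ i ∈ s, m i := by
  have h1 : ∑ v ∈ s.image m, v = ∑ i ∈ s, m i := Finset.sum_image hm
  have h2 : (s.image m).card = s.card := Finset.card_image_of_injOn hm
  calc ∑ i ∈ Finset.range s.card, i = ∑ i ∈ Finset.range (s.image m).card, i := by rw [h2]
    _ ≤ ∑ v ∈ s.image m, v := aux_sum_range_le _
    _ = ∑ i ∈ s, m i := h1

private lemma aux_card_lt_pairs {α : Type*} [LinearOrder α] [DecidableEq α] (s : Finset α) :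
    ((s ×ˢ s).filter fun p => p.1 < p.2).card * 2 = s.card * s.card - s.card := by
  have hswap : ((s ×ˢ s).filter fun p => p.1 < p.2).card
      = ((s ×ˢ s).filter fun p => p.2 < p.1).card := by
    apply Finset.card_nbij (fun p => p.swap)
    · intro p hp
      simp only [Finset.mem_coe, Finset.mem_filter, Finset.mem_product, Prod.fst_swap,
        Prod.snd_swap] at hp ⊢
      tauto
    · intro p _ q _ h
      simpa [Prod.ext_iff, and_comm] using congrArg Prod.swap h
    · intro p hp
      refine ⟨p.swap, ?_, by simp⟩
      simp only [Finset.mem_coe, Finset.mem_filter, Finset.mem_product, Prod.fst_swap,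
        Prod.snd_swap] at hp ⊢
      tauto
  have hdisj : Disjoint ((s ×ˢ s).filter fun p => p.1 < p.2)
      ((s ×ˢ s).filter fun p => p.2 < p.1) := by
    rw [Finset.disjoint_left]
    intro p hp hq
    simp only [Finset.mem_filter] at hp hq
    exact absurd hq.2 (not_lt.2 hp.2.le)
  have hunion : ((s ×ˢ s).filter fun p => p.1 < p.2) ∪ ((s ×ˢ s).filter fun p => p.2 < p.1)
      = s.offDiag := by
    ext p
    simp only [Finset.mem_union, Finset.mem_filter, Finset.mem_product, Finset.mem_offDiag]
    constructor
    · rintro (⟨⟨h1, h2⟩, h⟩ | ⟨⟨h1, h2⟩, h⟩)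
      · exact ⟨h1, h2, ne_of_lt h⟩
      · exact ⟨h1, h2, (ne_of_lt h).symm⟩
    · rintro ⟨h1, h2, h⟩
      rcases lt_or_gt_of_ne h with h | h
      · exact Or.inl ⟨⟨h1, h2⟩, h⟩
      · exact Or.inr ⟨⟨h1, h2⟩, h⟩
  have hcard := Finset.card_union_of_disjoint hdisj
  rw [hunion, Finset.offDiag_card] at hcard
  omega

private lemma aux_card_pairs_le_sum {α : Type*} [LinearOrder α] [DecidableEq α]
    (s : Finset α) (m : α → ℕ) (hm : ∀ x ∈ s, ∀ y ∈ s, m x = m y → x = y) :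
    ((s ×ˢ s).filter fun p => p.1 < p.2).card ≤ ∑ i ∈ s, m i := by
  have h1 := aux_card_lt_pairs s
  have h2 := aux_sum_range_le_of_injOn s m hm
  have h3 : (∑ i ∈ Finset.range s.card, i) * 2 = s.card * (s.card - 1) :=
    Finset.sum_range_id_mul_two s.card
  have h4 : s.card * s.card - s.card = s.card * (s.card - 1) := by
    cases s.card with
    | zero => simp
    | succ k => simp [Nat.mul_succ, Nat.succ_mul]
  omega

private lemma aux_degree_bound {n r : ℕ} (c : Fin n → Fin r) (m : Fin n → ℕ)
    (hm : ∀ i j, c i = c j → m i = m j → i = j) :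
    (Finset.univ.filter fun p : Fin n × Fin n => p.1 < p.2 ∧ c p.1 = c p.2).card ≤ ∑ i, m i := by
  have hcard : (Finset.univ.filter fun p : Fin n × Fin n => p.1 < p.2 ∧ c p.1 = c p.2).card
      = ∑ b : Fin r, ((Finset.univ.filter fun p : Fin n × Fin n =>
          p.1 < p.2 ∧ c p.1 = c p.2).filter fun p => c p.1 = b).card :=
    Finset.card_eq_sum_card_fiberwise (fun p _ => Finset.mem_univ (c p.1))
  have hsum : ∑ i, m i = ∑ b : Fin r, ∑ i ∈ Finset.univ.filter fun i => c i = b, m i :=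
    (Finset.sum_fiberwise Finset.univ c m).symm
  rw [hcard, hsum]
  apply Finset.sum_le_sum
  intro b _
  have hset : ((Finset.univ.filter fun p : Fin n × Fin n =>
      p.1 < p.2 ∧ c p.1 = c p.2).filter fun p => c p.1 = b)
      = ((Finset.univ.filter fun i => c i = b) ×ˢ (Finset.univ.filter fun i => c i = b)).filter
          fun p => p.1 < p.2 := by
    ext p
    simp only [Finset.mem_filter, Finset.mem_product, Finset.mem_univ, true_and]
    constructor
    · rintro ⟨⟨h1, h2⟩, h3⟩
      exact ⟨⟨h3, h2 ▸ h3⟩, h1⟩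
    · rintro ⟨⟨h1, h2⟩, h3⟩
      exact ⟨⟨h3, h1.trans h2.symm⟩, h1⟩
  rw [hset]
  apply aux_card_pairs_le_sum
  intro x hx y hy hxy
  simp only [Finset.mem_filter, Finset.mem_univ, true_and] at hx hy
  exact hm x y (hx.trans hy.symm) hxy


private lemma aux_prod_pairs_eq {n : ℕ} {M : Type*} [CommMonoid M] (f : Fin n × Fin n → M) :
    ∏ p ∈ Finset.univ.filter (fun p : Fin n × Fin n => p.1 < p.2), f p
      = ∏ i : Fin n, ∏ j ∈ Finset.Ioi i, f (i, j) := by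
  rw [Finset.prod_sigma']
  refine Finset.prod_nbij' (fun p : Fin n × Fin n => ⟨p.1, p.2⟩)
    (fun x : (_ : Fin n) × Fin n => (x.1, x.2)) ?_ ?_ ?_ ?_ ?_
  · intro p hp
    simp only [Finset.mem_filter, Finset.mem_univ, true_and] at hp
    simp [Finset.mem_Ioi, hp]
  · intro a ha
    simp only [Finset.mem_sigma, Finset.mem_univ, Finset.mem_Ioi] at ha
    simp [ha]
  · intro a _; rfl
  · intro p _; rfl
  · intro a _; rfl

private lemma aux_rename_vdm {n : ℕ} (σ : Equiv.Perm (Fin n)) :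
    rename ⇑σ (∏ p ∈ Finset.univ.filter (fun p : Fin n × Fin n => p.1 < p.2),
        ((X p.2 - X p.1 : MvPolynomial (Fin n) ℝ)))
      = (Equiv.Perm.sign σ : ℤ) • ∏ p ∈ Finset.univ.filter (fun p : Fin n × Fin n => p.1 < p.2),
          ((X p.2 - X p.1 : MvPolynomial (Fin n) ℝ)) := by
  have hV : ∀ v : Fin n → MvPolynomial (Fin n) ℝ,
      (Matrix.vandermonde v).det
        = ∏ p ∈ Finset.univ.filter (fun p : Fin n × Fin n => p.1 < p.2), (v p.2 - v p.1) := by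
    intro v
    rw [Matrix.det_vandermonde, aux_prod_pairs_eq (fun p => v p.2 - v p.1)]
  rw [← hV X]
  have h1 := RingHom.map_det
    (rename ⇑σ : MvPolynomial (Fin n) ℝ →ₐ[ℝ] MvPolynomial (Fin n) ℝ).toRingHom
    (Matrix.vandermonde (X : Fin n → MvPolynomial (Fin n) ℝ))
  have h2 : (rename ⇑σ : MvPolynomial (Fin n) ℝ →ₐ[ℝ] MvPolynomial (Fin n) ℝ).toRingHom.mapMatrix
      (Matrix.vandermonde (X : Fin n → MvPolynomial (Fin n) ℝ))
      = (Matrix.vandermonde (X : Fin n → MvPolynomial (Fin n) ℝ)).submatrix ⇑σ id := by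
    ext i j
    simp [Matrix.vandermonde, map_pow]
  rw [show (rename ⇑σ (Matrix.vandermonde (X : Fin n → MvPolynomial (Fin n) ℝ)).det)
      = (rename ⇑σ : MvPolynomial (Fin n) ℝ →ₐ[ℝ] MvPolynomial (Fin n) ℝ).toRingHom
        (Matrix.vandermonde (X : Fin n → MvPolynomial (Fin n) ℝ)).det from rfl,
    h1, h2, Matrix.det_permute, hV]
  rw [zsmul_eq_mul]


section
variable {n r : ℕ} (c : Fin n → Fin r)

-- cross-block order preservation
private lemma aux_cross_lt (hc : Monotone c) {σ : Equiv.Perm (Fin n)}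
    (hσ : ∀ i, c (σ i) = c i) {i j : Fin n} (hij : i < j) (hne : c i ≠ c j) :
    σ i < σ j := by
  have h1 : c i < c j := lt_of_le_of_ne (hc hij.le) hne
  by_contra h
  rcases eq_or_lt_of_le (not_lt.1 h) with h' | h'
  · exact hne (by rw [← hσ i, ← hσ j, σ.injective (σ.injective (congrArg σ (congrArg σ h'.symm)))] )
  · have := hc h'.le
    rw [hσ i, hσ j] at this
    exact absurd h1 (not_lt.2 this)

private lemma aux_inv_mem {σ : Equiv.Perm (Fin n)} (hσ : ∀ i, c (σ i) = c i) :
    ∀ i, c (σ⁻¹ i) = c i := by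
  intro i
  conv_rhs => rw [← (by simp : σ (σ⁻¹ i) = i)]
  rw [hσ]

-- invariance of the cross-block product
private lemma aux_rename_cross (hc : Monotone c) {σ : Equiv.Perm (Fin n)}
    (hσ : ∀ i, c (σ i) = c i) :
    rename ⇑σ (∏ p ∈ Finset.univ.filter (fun p : Fin n × Fin n => p.1 < p.2 ∧ ¬ c p.1 = c p.2),
        ((X p.2 - X p.1 : MvPolynomial (Fin n) ℝ)))
      = ∏ p ∈ Finset.univ.filter (fun p : Fin n × Fin n => p.1 < p.2 ∧ ¬ c p.1 = c p.2),
          ((X p.2 - X p.1 : MvPolynomial (Fin n) ℝ)) := by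
  rw [map_prod]
  refine Finset.prod_nbij' (fun p : Fin n × Fin n => (σ p.1, σ p.2))
    (fun p : Fin n × Fin n => (σ⁻¹ p.1, σ⁻¹ p.2)) ?_ ?_ ?_ ?_ ?_
  · intro p hp
    simp only [Finset.mem_filter, Finset.mem_univ, true_and] at hp ⊢
    exact ⟨aux_cross_lt c hc hσ hp.1 hp.2, by rw [hσ, hσ]; exact hp.2⟩
  · intro p hp
    simp only [Finset.mem_filter, Finset.mem_univ, true_and] at hp ⊢
    refine ⟨aux_cross_lt c hc (aux_inv_mem c hσ) hp.1 hp.2, ?_⟩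
    rw [aux_inv_mem c hσ, aux_inv_mem c hσ]; exact hp.2
  · intro p _; simp
  · intro p _; simp
  · intro p _; simp [map_sub, rename_X]
end


section
variable {n r : ℕ} (c : Fin n → Fin r)

private lemma aux_rename_P' (hc : Monotone c) {σ : Equiv.Perm (Fin n)}
    (hσ : ∀ i, c (σ i) = c i) :
    rename ⇑σ (∏ p ∈ Finset.univ.filter (fun p : Fin n × Fin n => p.1 < p.2 ∧ c p.1 = c p.2),
        ((X p.2 - X p.1 : MvPolynomial (Fin n) ℝ)))
      = (Equiv.Perm.sign σ : ℤ) •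
        ∏ p ∈ Finset.univ.filter (fun p : Fin n × Fin n => p.1 < p.2 ∧ c p.1 = c p.2),
          ((X p.2 - X p.1 : MvPolynomial (Fin n) ℝ)) := by
  have hsplit : (∏ p ∈ Finset.univ.filter (fun p : Fin n × Fin n => p.1 < p.2 ∧ c p.1 = c p.2),
        ((X p.2 - X p.1 : MvPolynomial (Fin n) ℝ)))
      * ∏ p ∈ Finset.univ.filter (fun p : Fin n × Fin n => p.1 < p.2 ∧ ¬ c p.1 = c p.2),
          ((X p.2 - X p.1 : MvPolynomial (Fin n) ℝ))
      = ∏ p ∈ Finset.univ.filter (fun p : Fin n × Fin n => p.1 < p.2),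
          ((X p.2 - X p.1 : MvPolynomial (Fin n) ℝ)) := by
    rw [← Finset.prod_filter_mul_prod_filter_not
      (Finset.univ.filter (fun p : Fin n × Fin n => p.1 < p.2)) (fun p => c p.1 = c p.2),
      Finset.filter_filter, Finset.filter_filter]
  have hC0 : (∏ p ∈ Finset.univ.filter (fun p : Fin n × Fin n => p.1 < p.2 ∧ ¬ c p.1 = c p.2),
      ((X p.2 - X p.1 : MvPolynomial (Fin n) ℝ))) ≠ 0 := by
    rw [Finset.prod_ne_zero_iff]
    intro p hp
    simp only [Finset.mem_filter, Finset.mem_univ, true_and] at hp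
    exact sub_ne_zero.mpr fun h => absurd (X_injective h) (ne_of_gt hp.1)
  apply mul_right_cancel₀ hC0
  rw [smul_mul_assoc, hsplit, ← aux_rename_cross c hc hσ, ← map_mul, hsplit,
    aux_rename_vdm]

private lemma aux_rename_P (hc : Monotone c) {σ : Equiv.Perm (Fin n)}
    (hσ : ∀ i, c (σ i) = c i) :
    rename ⇑σ (∏ p ∈ Finset.univ.filter (fun p : Fin n × Fin n => p.1 < p.2 ∧ c p.1 = c p.2),
        ((X p.1 - X p.2 : MvPolynomial (Fin n) ℝ)))
      = (Equiv.Perm.sign σ : ℤ) •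
        ∏ p ∈ Finset.univ.filter (fun p : Fin n × Fin n => p.1 < p.2 ∧ c p.1 = c p.2),
          ((X p.1 - X p.2 : MvPolynomial (Fin n) ℝ)) := by
  have hneg : ∀ v : Fin n → MvPolynomial (Fin n) ℝ, True := fun _ => trivial
  have key : (∏ p ∈ Finset.univ.filter (fun p : Fin n × Fin n => p.1 < p.2 ∧ c p.1 = c p.2),
        ((X p.1 - X p.2 : MvPolynomial (Fin n) ℝ)))
      = (-1 : MvPolynomial (Fin n) ℝ) ^
          (Finset.univ.filter (fun p : Fin n × Fin n => p.1 < p.2 ∧ c p.1 = c p.2)).card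
        * ∏ p ∈ Finset.univ.filter (fun p : Fin n × Fin n => p.1 < p.2 ∧ c p.1 = c p.2),
            ((X p.2 - X p.1 : MvPolynomial (Fin n) ℝ)) := by
    rw [← Finset.prod_const, ← Finset.prod_mul_distrib]
    apply Finset.prod_congr rfl
    intro p _
    ring
  rw [key, map_mul, map_pow, map_neg, map_one, aux_rename_P' c hc hσ]
  rw [mul_smul_comm]
end


section
variable {n r : ℕ} (c : Fin n → Fin r)

private lemma aux_inv_mem' {σ : Equiv.Perm (Fin n)} (hσ : ∀ i, c (σ i) = c i) :
    ∀ i, c (σ⁻¹ i) = c i := by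
  intro i
  conv_rhs => rw [← (by simp : σ (σ⁻¹ i) = i)]
  rw [hσ]

/-- Alternation of the skew-symmetrized sum. -/
private lemma aux_alt (Q : MvPolynomial (Fin n) ℝ) {τ : Equiv.Perm (Fin n)}
    (hτ : ∀ i, c (τ i) = c i) :
    rename ⇑τ (∑ σ ∈ Finset.univ.filter (fun σ : Equiv.Perm (Fin n) => ∀ i, c (σ i) = c i),
        (Equiv.Perm.sign σ : ℤ) • rename ⇑σ Q)
      = (Equiv.Perm.sign τ : ℤ) •
        ∑ σ ∈ Finset.univ.filter (fun σ : Equiv.Perm (Fin n) => ∀ i, c (σ i) = c i),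
          (Equiv.Perm.sign σ : ℤ) • rename ⇑σ Q := by
  rw [map_sum]
  have step1 : ∀ σ : Equiv.Perm (Fin n),
      rename ⇑τ ((Equiv.Perm.sign σ : ℤ) • rename ⇑σ Q)
        = (Equiv.Perm.sign σ : ℤ) • rename ⇑(τ * σ) Q := by
    intro σ
    rw [map_zsmul, rename_rename, ← Equiv.Perm.coe_mul]
  simp only [step1]
  rw [Finset.smul_sum]
  refine Finset.sum_nbij' (fun σ => τ * σ) (fun σ => τ⁻¹ * σ) ?_ ?_ ?_ ?_ ?_
  · intro σ hσ
    simp only [Finset.mem_filter, Finset.mem_univ, true_and] at hσ ⊢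
    intro i
    rw [Equiv.Perm.mul_apply, hτ, hσ]
  · intro σ hσ
    simp only [Finset.mem_filter, Finset.mem_univ, true_and] at hσ ⊢
    intro i
    rw [Equiv.Perm.mul_apply, aux_inv_mem' c hτ, hσ]
  · intro σ _; group
  · intro σ _; group
  · intro σ hσ
    have hsign : ((Equiv.Perm.sign (τ * σ) : ℤ)) = (Equiv.Perm.sign τ : ℤ) * (Equiv.Perm.sign σ : ℤ) := by
      rw [map_mul]; push_cast; ring
    rw [hsign, ← mul_smul]
    congr 1
    have h2 : (Equiv.Perm.sign τ : ℤ) * (Equiv.Perm.sign τ : ℤ) = 1 := by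
      rw [← Units.val_mul, Int.units_mul_self, Units.val_one]
    rw [← mul_assoc, h2, one_mul]
end

/-- Skew-symmetrization identities from the proof of Lemma 3.3 for `𝔤 = 𝔤𝔩(n,ℝ)`:
for the group `W` of permutations preserving the blocks (fibers) of a monotone map `c`,
and `P` the set of within-block ordered pairs with `π_T = ∏_{(i,j)∈T} (X_i - X_j)`,
(a) `∑_{σ∈W} sign(σ) σ·π_{P∖S} = 0` for every nonempty `S ⊆ P`, and
(b) `∑_{σ∈W} sign(σ) σ·π_P = |W| π_P`. -/
theorem skew_symmetrization_of_partial_products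
    {n r : ℕ} (hn : 1 ≤ n) (hr : 1 ≤ r)
    (c : Fin n → Fin r) (hc : Monotone c) :
    (∀ S : Finset (Fin n × Fin n),
        S ⊆ Finset.univ.filter (fun p : Fin n × Fin n => p.1 < p.2 ∧ c p.1 = c p.2) →
        S.Nonempty →
        ∑ σ ∈ Finset.univ.filter (fun σ : Equiv.Perm (Fin n) => ∀ i, c (σ i) = c i),
          (Equiv.Perm.sign σ : ℤ) •
            MvPolynomial.rename (⇑σ)
              (∏ p ∈ (Finset.univ.filter
                  (fun p : Fin n × Fin n => p.1 < p.2 ∧ c p.1 = c p.2)) \ S,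
                ((X p.1 - X p.2 : MvPolynomial (Fin n) ℝ)))
          = 0) ∧
    (∑ σ ∈ Finset.univ.filter (fun σ : Equiv.Perm (Fin n) => ∀ i, c (σ i) = c i),
        (Equiv.Perm.sign σ : ℤ) •
          MvPolynomial.rename (⇑σ)
            (∏ p ∈ Finset.univ.filter
                (fun p : Fin n × Fin n => p.1 < p.2 ∧ c p.1 = c p.2),
              ((X p.1 - X p.2 : MvPolynomial (Fin n) ℝ)))
      = (Finset.univ.filter
            (fun σ : Equiv.Perm (Fin n) => ∀ i, c (σ i) = c i)).card •
          ∏ p ∈ Finset.univ.filter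
              (fun p : Fin n × Fin n => p.1 < p.2 ∧ c p.1 = c p.2),
            ((X p.1 - X p.2 : MvPolynomial (Fin n) ℝ))) := by
  constructor
  · -- part (a)
    intro S hS hSne
    set P : Finset (Fin n × Fin n) :=
      Finset.univ.filter (fun p : Fin n × Fin n => p.1 < p.2 ∧ c p.1 = c p.2) with hP
    set Q : MvPolynomial (Fin n) ℝ := ∏ p ∈ P \ S, ((X p.1 - X p.2 : MvPolynomial (Fin n) ℝ))
      with hQ
    set A : MvPolynomial (Fin n) ℝ :=
      ∑ σ ∈ Finset.univ.filter (fun σ : Equiv.Perm (Fin n) => ∀ i, c (σ i) = c i),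
        (Equiv.Perm.sign σ : ℤ) • rename ⇑σ Q with hA
    -- degree bound on A
    have hdegQ : Q.totalDegree ≤ (P \ S).card := by
      refine (totalDegree_finset_prod _ _).trans ?_
      have : ∀ p ∈ P \ S, ((X p.1 - X p.2 : MvPolynomial (Fin n) ℝ)).totalDegree ≤ 1 := by
        intro p _
        rw [sub_eq_add_neg]
        refine (totalDegree_add _ _).trans ?_
        simp [totalDegree_neg, totalDegree_X]
      calc (∑ p ∈ P \ S, ((X p.1 - X p.2 : MvPolynomial (Fin n) ℝ)).totalDegree)
          ≤ ∑ _p ∈ P \ S, 1 := Finset.sum_le_sum this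
        _ = (P \ S).card := by simp
    have hdegA : A.totalDegree ≤ (P \ S).card := by
      refine (totalDegree_finset_sum _ _).trans ?_
      refine Finset.sup_le fun σ _ => ?_
      refine (totalDegree_smul_le _ _).trans ?_
      refine (totalDegree_rename_le _ _).trans hdegQ
    -- every monomial in the support of A is injective on blocks
    have hsupp : ∀ m ∈ A.support, ∀ i j : Fin n, c i = c j → m i = m j → i = j := by
      intro m hm i j hcij hmij
      by_contra hne
      have hτmem : ∀ k, c ((Equiv.swap i j) k) = c k := by
        intro k
        rcases eq_or_ne k i with rfl | hki
        · rw [Equiv.swap_apply_left]; exact hcij.symm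
        rcases eq_or_ne k j with rfl | hkj
        · rw [Equiv.swap_apply_right]; exact hcij
        · rw [Equiv.swap_apply_of_ne_of_ne hki hkj]
      have halt := aux_alt c Q hτmem
      rw [← hA, Equiv.Perm.sign_swap hne] at halt
      have hAneg : rename ⇑(Equiv.swap i j) A = -A := by
        rw [halt]; push_cast; simp
      have hmap : Finsupp.mapDomain ⇑(Equiv.swap i j) m = m := by
        ext k
        rw [Finsupp.mapDomain_equiv_apply]
        rw [Equiv.symm_swap]
        rcases eq_or_ne k i with rfl | hki
        · rw [Equiv.swap_apply_left]; exact hmij.symm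
        rcases eq_or_ne k j with rfl | hkj
        · rw [Equiv.swap_apply_right]; exact hmij
        · rw [Equiv.swap_apply_of_ne_of_ne hki hkj]
      have hcoeff := coeff_rename_mapDomain ⇑(Equiv.swap i j) (Equiv.injective _) A m
      rw [hmap, hAneg, coeff_neg] at hcoeff
      have : coeff m A = 0 := by linarith
      exact absurd this (mem_support_iff.1 hm)
    -- now conclude
    by_contra hA0
    obtain ⟨m, hm⟩ := (support_nonempty.2 hA0)
    have h1 : P.card ≤ ∑ i, m i := aux_degree_bound c m (fun i j h h' => hsupp m hm i j h h')
    have h2 : (m.sum fun _ e => e) ≤ A.totalDegree := le_totalDegree hm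
    have h3 : (m.sum fun _ e => e) = ∑ i, m i := Finsupp.sum_fintype _ _ (fun _ => rfl)
    have h4 : (P \ S).card = P.card - S.card := Finset.card_sdiff_of_subset hS
    have h5 : 1 ≤ S.card := Finset.Nonempty.card_pos hSne
    have h6 : S.card ≤ P.card := Finset.card_le_card hS
    omega
  · -- part (b)
    set P : Finset (Fin n × Fin n) :=
      Finset.univ.filter (fun p : Fin n × Fin n => p.1 < p.2 ∧ c p.1 = c p.2) with hP
    set π : MvPolynomial (Fin n) ℝ := ∏ p ∈ P, ((X p.1 - X p.2 : MvPolynomial (Fin n) ℝ))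
      with hπ
    have : ∀ σ ∈ Finset.univ.filter (fun σ : Equiv.Perm (Fin n) => ∀ i, c (σ i) = c i),
        (Equiv.Perm.sign σ : ℤ) • rename ⇑σ π = π := by
      intro σ hσ
      simp only [Finset.mem_filter, Finset.mem_univ, true_and] at hσ
      rw [hπ, hP, aux_rename_P c hc hσ, ← mul_smul]
      rw [← Units.val_mul, Int.units_mul_self, Units.val_one, one_smul]
    rw [Finset.sum_congr rfl this, Finset.sum_const]
end

section
/- Let n ≥ 1 and let λ = (λ_1, …, λ_n) ∈ ℝ^n. Let I = {(i, j) ∈ Fin n × Fin n : i ≠ j}, and define the square matrix M indexed by I with entries M_{(i,j),(k,l)} = tr(diag(λ) · (E_{ij} E_{kl} − E_{kl} E_{ij})), where E_{ij} denotes the matrix unit with a 1 in position (i,j) and zeros elsewhere, and diag(λ) is the diagonal matrix with entries λ_1, …, λ_n. Then det M = ∏_{1 ≤ i < j ≤ n} (λ_i − λ_j)². -/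
open Matrix

private lemma tr_diag_std {n : ℕ} (lam : Fin n → ℝ) (a b : Fin n) (c : ℝ) :
    trace (diagonal lam * single a b c) = if b = a then lam a * c else 0 := by
  simp [Matrix.trace, Matrix.diag, mul_apply, diagonal_apply, single,
    Finset.sum_ite_eq, ite_and]
  by_cases h : b = a <;> simp [h, Finset.sum_ite_eq]

private lemma kk_entry_eq {n : ℕ} (lam : Fin n → ℝ) (p q : {p : Fin n × Fin n // p.1 ≠ p.2}) :
    trace (diagonal lam * (single p.1.1 p.1.2 (1:ℝ) * single q.1.1 q.1.2 1 -
      single q.1.1 q.1.2 1 * single p.1.1 p.1.2 1)) =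
    if q.1.1 = p.1.2 ∧ q.1.2 = p.1.1 then lam p.1.1 - lam p.1.2 else 0 := by
  obtain ⟨⟨i,j⟩, hij⟩ := p
  obtain ⟨⟨k,l⟩, hkl⟩ := q
  simp only at hij hkl ⊢
  rw [mul_sub, trace_sub]
  by_cases h1 : k = j
  · subst h1
    by_cases h2 : l = i
    · subst h2
      rw [Matrix.single_mul_single_same, Matrix.single_mul_single_same,
        tr_diag_std, tr_diag_std]
      simp [hij, Ne.symm hij]
    · rw [Matrix.single_mul_single_same, Matrix.single_mul_single_of_ne 1 k l i h2 1]
      rw [tr_diag_std]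
      simp [fun h : l = i => h2 h, h2]
  · rw [Matrix.single_mul_single_of_ne 1 i j k (Ne.symm h1) 1]
    by_cases h2 : l = i
    · subst h2
      rw [Matrix.single_mul_single_same, tr_diag_std]
      simp [h1]
      intro h
      exact absurd h.symm h1
    · rw [Matrix.single_mul_single_of_ne 1 k l i h2 1]
      simp [h1]

/-- The fixed-point-free involution `(i,j) ↦ (j,i)` realized as an equivalence
sorting each off-diagonal pair, used to bring the form into block-diagonal shape. -/
private def pairEquiv (n : ℕ) :
    {p : Fin n × Fin n // p.1 ≠ p.2} ≃ Fin 2 × {p : Fin n × Fin n // p.1 < p.2} where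
  toFun p := if h : p.1.1 < p.1.2 then (0, ⟨p.1, h⟩)
    else (1, ⟨(p.1.2, p.1.1), lt_of_le_of_ne (not_lt.1 h) (Ne.symm p.2)⟩)
  invFun q := if q.1 = 0 then ⟨q.2.1, ne_of_lt q.2.2⟩
    else ⟨(q.2.1.2, q.2.1.1), (ne_of_lt q.2.2).symm⟩
  left_inv p := by
    obtain ⟨⟨i, j⟩, hij⟩ := p
    by_cases h : i < j <;> simp [h]
  right_inv q := by
    obtain ⟨b, ⟨⟨i, j⟩, hij⟩⟩ := q
    fin_cases b <;> simp [hij, not_lt_of_gt, lt_asymm hij]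

private lemma kk_entry_block {n : ℕ} (lam : Fin n → ℝ) (i j k l : Fin n)
    (hij : i ≠ j) (hkl : k ≠ l) :
    (if k = j ∧ l = i then lam i - lam j else 0) =
    (Matrix.blockDiagonal fun s : {p : Fin n × Fin n // p.1 < p.2} =>
          !![0, lam s.1.1 - lam s.1.2; lam s.1.2 - lam s.1.1, 0])
      (pairEquiv n ⟨(i,j), hij⟩) (pairEquiv n ⟨(k,l), hkl⟩) := by
  rw [Matrix.blockDiagonal_apply]
  by_cases hp : i < j <;> by_cases hq : k < l
  · simp [pairEquiv, hp, hq]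
    intro h1 h2
    rw [h1, h2] at hq
    exact absurd hq (asymm hp)
  · simp [pairEquiv, hp, hq]
    exact if_congr ⟨fun ⟨h1, h2⟩ => ⟨h2.symm, h1.symm⟩, fun ⟨h1, h2⟩ => ⟨h2.symm, h1.symm⟩⟩ rfl rfl
  · simp [pairEquiv, hp, hq]
    exact if_congr ⟨fun ⟨h1, h2⟩ => ⟨h1.symm, h2.symm⟩, fun ⟨h1, h2⟩ => ⟨h1.symm, h2.symm⟩⟩ rfl rfl
  · simp [pairEquiv, hp, hq]
    intro h1 h2
    rw [h1, h2] at hq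
    exact absurd (lt_of_le_of_ne (not_lt.1 hp) (Ne.symm hij)) hq

/-- The determinant computation `det(ω_λ(X_α, X_β)) = ∏_{α∈Δ⁺} λ(H_α)²` from the proof
of Lemma 3.2, for `𝔤 = 𝔤𝔩(n,ℝ)` with the diagonal Cartan: the Kostant–Kirillov form
evaluated on the off-diagonal matrix units `E_{ij}` (`i ≠ j`) has determinant
`∏_{i<j} (λ_i - λ_j)²`. -/
theorem det_kostant_kirillov_form_on_matrix_units
    {n : ℕ} (hn : 1 ≤ n) (lam : Fin n → ℝ) :
    Matrix.det
      (Matrix.of fun p q : {p : Fin n × Fin n // p.1 ≠ p.2} =>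
        Matrix.trace (Matrix.diagonal lam *
          (Matrix.single p.1.1 p.1.2 (1 : ℝ) * Matrix.single q.1.1 q.1.2 1 -
            Matrix.single q.1.1 q.1.2 1 * Matrix.single p.1.1 p.1.2 1)))
      = ∏ p ∈ Finset.univ.filter (fun p : Fin n × Fin n => p.1 < p.2),
          (lam p.1 - lam p.2) ^ 2 := by
  have key : (Matrix.of fun p q : {p : Fin n × Fin n // p.1 ≠ p.2} =>
        Matrix.trace (Matrix.diagonal lam *
          (Matrix.single p.1.1 p.1.2 (1 : ℝ) * Matrix.single q.1.1 q.1.2 1 -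
            Matrix.single q.1.1 q.1.2 1 * Matrix.single p.1.1 p.1.2 1))) =
      ((Matrix.blockDiagonal fun s : {p : Fin n × Fin n // p.1 < p.2} =>
          !![0, lam s.1.1 - lam s.1.2; lam s.1.2 - lam s.1.1, 0]).submatrix
        (pairEquiv n) (pairEquiv n)) := by
    ext p q
    rw [Matrix.of_apply, kk_entry_eq, Matrix.submatrix_apply]
    obtain ⟨⟨i, j⟩, hij⟩ := p
    obtain ⟨⟨k, l⟩, hkl⟩ := q
    exact kk_entry_block lam i j k l hij hkl
  rw [key, Matrix.det_submatrix_equiv_self, Matrix.det_blockDiagonal]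
  trans ∏ s : {p : Fin n × Fin n // p.1 < p.2}, (lam s.1.1 - lam s.1.2) ^ 2
  · refine Finset.prod_congr rfl fun s _ => ?_
    rw [Matrix.det_fin_two_of]
    ring
  · exact (Finset.prod_subtype (p := fun p : Fin n × Fin n => p.1 < p.2) _ (fun x => by simp)
      (fun p => (lam p.1 - lam p.2) ^ 2)).symm
end
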